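/- arXiv:1907.08829 — 3 statements merged into one kernel-verified Lean document; each statement's English description precedes it below -/
import Mathlib

section
/- If R_min < 1 < R_max, then the three sets {p ∈ [0,1]^N : Λ(p) < 0}, {p ∈ [0,1]^N : Λ(p) > 0}, and {p ∈ [0,1]^N : Λ(p) = 0} are all nonempty. -/
open Matrix Filter Topology

/-- Spectral radius of a real matrix: sup of absolute values of its complex eigenvalues. -/
noncomputable def specRad (N : ℕ) (A : Matrix (Fin N) (Fin N) ℝ) : ℝ :=
  sSup {r : ℝ | ∃ μ ∈ spectrum ℂ (A.map (Complex.ofReal : ℝ → ℂ)), r = ‖μ‖}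

/-- Spectral abscissa of a real matrix: sup of real parts of its complex eigenvalues. -/
noncomputable def specAbsc (N : ℕ) (A : Matrix (Fin N) (Fin N) ℝ) : ℝ :=
  sSup {r : ℝ | ∃ μ ∈ spectrum ℂ (A.map (Complex.ofReal : ℝ → ℂ)), r = μ.re}

/-- Irreducibility of a nonnegative matrix. -/
def MatIrreducible (N : ℕ) (A : Matrix (Fin N) (Fin N) ℝ) : Prop :=
  ∀ i j : Fin N, ∃ m : ℕ, 0 < m ∧ 0 < (A ^ m) i j

/-- The cube [0,1]^N. -/
def cube (N : ℕ) : Set (Fin N → ℝ) := {p | ∀ j, 0 ≤ p j ∧ p j ≤ 1}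

/-- B*(p) = (I − diag p) B̂ + diag p · B. -/
noncomputable def Bstar (N : ℕ) (B Bh : Matrix (Fin N) (Fin N) ℝ) (p : Fin N → ℝ) :
    Matrix (Fin N) (Fin N) ℝ :=
  (1 - Matrix.diagonal p) * Bh + Matrix.diagonal p * B

/-- The network SIRI vector field on (p^S, p^I). -/
noncomputable def siriField (N : ℕ) (B Bh D : Matrix (Fin N) (Fin N) ℝ)
    (y : (Fin N → ℝ) × (Fin N → ℝ)) : (Fin N → ℝ) × (Fin N → ℝ) :=
  (fun j => -(y.1 j * (B *ᵥ y.2) j),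
   fun j => ((Bstar N B Bh y.1 - D) *ᵥ y.2) j - y.2 j * (Bh *ᵥ y.2) j)

/-- Membership in the state space Δ_N. -/
def inSimplex (N : ℕ) (y : (Fin N → ℝ) × (Fin N → ℝ)) : Prop :=
  ∀ j, 0 ≤ y.1 j ∧ 0 ≤ y.2 j ∧ y.1 j + y.2 j ≤ 1

/-- y is a solution of the SIRI dynamics for t ≥ 0. -/
def IsSol (N : ℕ) (B Bh D : Matrix (Fin N) (Fin N) ℝ)
    (y : ℝ → (Fin N → ℝ) × (Fin N → ℝ)) : Prop :=
  ∀ t : ℝ, 0 ≤ t → HasDerivAt y (siriField N B Bh D (y t)) t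

/-- Reproduction number R(p) = ρ(B*(p) D⁻¹). -/
noncomputable def Rnum (N : ℕ) (B Bh D : Matrix (Fin N) (Fin N) ℝ) (p : Fin N → ℝ) : ℝ :=
  specRad N (Bstar N B Bh p * D⁻¹)

/-- Maximum basic reproduction number. -/
noncomputable def Rmax (N : ℕ) (B Bh D : Matrix (Fin N) (Fin N) ℝ) : ℝ :=
  sSup (Rnum N B Bh D '' cube N)

/-- Minimum basic reproduction number. -/
noncomputable def Rmin (N : ℕ) (B Bh D : Matrix (Fin N) (Fin N) ℝ) : ℝ :=
  sInf (Rnum N B Bh D '' cube N)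

section Aux

open scoped ENNReal NNReal

attribute [local instance] Matrix.linftyOpNormedAddCommGroup Matrix.linftyOpNormedRing
  Matrix.linftyOpNormedAlgebra

variable {N : ℕ}

/-- compatibility: the complex absolute value as an absolute value -/
noncomputable def Complex.abs : AbsoluteValue ℂ ℝ := NormedField.toAbsoluteValue ℂ

lemma Complex.norm_eq_abs (z : ℂ) : ‖z‖ = Complex.abs z := rfl

lemma Complex.abs_ofReal (r : ℝ) : Complex.abs (r : ℂ) = |r| := by
  rw [← Complex.norm_eq_abs, Complex.norm_real, Real.norm_eq_abs]

lemma ofReal_norm_eq_coe_nnnorm {E : Type*} [SeminormedAddGroup E] (a : E) :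
    ENNReal.ofReal ‖a‖ = ((‖a‖₊ : ℝ≥0) : ℝ≥0∞) := ENNReal.ofReal_eq_coe_nnreal _

/-- complexification -/
noncomputable def Mc {N : ℕ} (A : Matrix (Fin N) (Fin N) ℝ) : Matrix (Fin N) (Fin N) ℂ :=
  A.map (Complex.ofReal : ℝ → ℂ)

lemma Mc_apply (A : Matrix (Fin N) (Fin N) ℝ) (j k : Fin N) : Mc A j k = (A j k : ℂ) := rfl

lemma Mc_pow (A : Matrix (Fin N) (Fin N) ℝ) (m : ℕ) : (Mc A) ^ m = Mc (A ^ m) := by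
  exact (map_pow (Complex.ofRealHom.mapMatrix (m := Fin N)) A m).symm

lemma radSet_eq (A : Matrix (Fin N) (Fin N) ℝ) :
    {r : ℝ | ∃ μ ∈ spectrum ℂ (Mc A), r = Complex.abs μ}
      = Complex.abs '' spectrum ℂ (Mc A) := by
  ext r; simp [Set.mem_image, eq_comm]

lemma radSet_finite (A : Matrix (Fin N) (Fin N) ℝ) :
    {r : ℝ | ∃ μ ∈ spectrum ℂ (Mc A), r = Complex.abs μ}.Finite := by
  rw [radSet_eq]; exact (Matrix.finite_spectrum _).image _

lemma abscSet_eq (A : Matrix (Fin N) (Fin N) ℝ) :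
    {r : ℝ | ∃ μ ∈ spectrum ℂ (Mc A), r = μ.re}
      = Complex.re '' spectrum ℂ (Mc A) := by
  ext r; simp [Set.mem_image, eq_comm]

lemma abscSet_finite (A : Matrix (Fin N) (Fin N) ℝ) :
    {r : ℝ | ∃ μ ∈ spectrum ℂ (Mc A), r = μ.re}.Finite := by
  rw [abscSet_eq]; exact (Matrix.finite_spectrum _).image _

lemma spec_nonempty (hN : 0 < N) (A : Matrix (Fin N) (Fin N) ℝ) :
    (spectrum ℂ (Mc A)).Nonempty := by
  haveI : Nonempty (Fin N) := ⟨⟨0, hN⟩⟩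
  exact spectrum.nonempty (Mc A)

lemma exists_abs_eq (hN : 0 < N) (A : Matrix (Fin N) (Fin N) ℝ) :
    ∃ μ ∈ spectrum ℂ (Mc A), Complex.abs μ = specRad N A := by
  have h1 : {r : ℝ | ∃ μ ∈ spectrum ℂ (Mc A), r = Complex.abs μ}.Nonempty := by
    obtain ⟨μ, hμ⟩ := spec_nonempty hN A; exact ⟨_, μ, hμ, rfl⟩
  obtain ⟨μ, hμ, he⟩ := h1.csSup_mem (radSet_finite A)
  exact ⟨μ, hμ, he.symm⟩

lemma abs_le_specRad {A : Matrix (Fin N) (Fin N) ℝ} {μ : ℂ} (hμ : μ ∈ spectrum ℂ (Mc A)) :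
    Complex.abs μ ≤ specRad N A :=
  le_csSup (radSet_finite A).bddAbove ⟨μ, hμ, rfl⟩

lemma specRad_nonneg (hN : 0 < N) (A : Matrix (Fin N) (Fin N) ℝ) : 0 ≤ specRad N A := by
  obtain ⟨μ, _, he⟩ := exists_abs_eq hN A
  rw [← he]; positivity

lemma exists_re_eq (hN : 0 < N) (A : Matrix (Fin N) (Fin N) ℝ) :
    ∃ μ ∈ spectrum ℂ (Mc A), μ.re = specAbsc N A := by
  have h1 : {r : ℝ | ∃ μ ∈ spectrum ℂ (Mc A), r = μ.re}.Nonempty := by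
    obtain ⟨μ, hμ⟩ := spec_nonempty hN A; exact ⟨_, μ, hμ, rfl⟩
  obtain ⟨μ, hμ, he⟩ := h1.csSup_mem (abscSet_finite A)
  exact ⟨μ, hμ, he.symm⟩

lemma re_le_specAbsc {A : Matrix (Fin N) (Fin N) ℝ} {μ : ℂ} (hμ : μ ∈ spectrum ℂ (Mc A)) :
    μ.re ≤ specAbsc N A :=
  le_csSup (abscSet_finite A).bddAbove ⟨μ, hμ, rfl⟩

lemma spectralRadius_eq (hN : 0 < N) (A : Matrix (Fin N) (Fin N) ℝ) :
    spectralRadius ℂ (Mc A) = ENNReal.ofReal (specRad N A) := by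
  apply le_antisymm
  · rw [spectralRadius]
    refine iSup₂_le fun μ hμ => ?_
    rw [← ofReal_norm_eq_coe_nnnorm]
    exact ENNReal.ofReal_le_ofReal (by rw [Complex.norm_eq_abs]; exact abs_le_specRad hμ)
  · obtain ⟨μ, hμ, he⟩ := exists_abs_eq hN A
    rw [← he, ← Complex.norm_eq_abs, ofReal_norm_eq_coe_nnnorm]
    exact le_iSup₂ (f := fun (μ : ℂ) (_ : μ ∈ spectrum ℂ (Mc A)) => (‖μ‖₊ : ℝ≥0∞)) μ hμ

lemma gelfand (hN : 0 < N) (A : Matrix (Fin N) (Fin N) ℝ) :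
    Tendsto (fun m : ℕ => (‖(Mc A) ^ m‖₊ : ℝ≥0∞) ^ (1 / (m : ℝ))) atTop
      (𝓝 (ENNReal.ofReal (specRad N A))) := by
  haveI : Nonempty (Fin N) := ⟨⟨0, hN⟩⟩
  simpa [spectralRadius_eq hN A] using
    spectrum.pow_nnnorm_pow_one_div_tendsto_nhds_spectralRadius (Mc A)

lemma pow_specRad_le (hN : 0 < N) (A : Matrix (Fin N) (Fin N) ℝ) (m : ℕ) :
    specRad N A ^ m ≤ ‖(Mc A) ^ m‖ := by
  haveI : Nonempty (Fin N) := ⟨⟨0, hN⟩⟩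
  obtain ⟨μ, hμ, he⟩ := exists_abs_eq hN A
  have h2 : μ ^ m ∈ spectrum ℂ ((Mc A) ^ m) := by
    have h3 := spectrum.subset_polynomial_aeval (Mc A) ((Polynomial.X : Polynomial ℂ) ^ m)
    have : (Polynomial.eval μ ((Polynomial.X : Polynomial ℂ) ^ m)) ∈
        spectrum ℂ (Polynomial.aeval (Mc A) ((Polynomial.X : Polynomial ℂ) ^ m)) :=
      h3 ⟨μ, hμ, rfl⟩
    simpa using this
  have h3 := spectrum.norm_le_norm_of_mem h2
  calc specRad N A ^ m = Complex.abs (μ ^ m) := by rw [map_pow, he]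
  _ ≤ ‖(Mc A) ^ m‖ := by rw [← Complex.norm_eq_abs]; exact h3

lemma pow_nonneg_entries {C : Matrix (Fin N) (Fin N) ℝ} (hC : ∀ j k, 0 ≤ C j k) :
    ∀ (m : ℕ) (j k : Fin N), 0 ≤ (C ^ m) j k := by
  intro m
  induction m with
  | zero => intro j k; rw [pow_zero]; by_cases h : j = k <;> simp [Matrix.one_apply, h]
  | succ m ih =>
    intro j k
    rw [pow_succ, Matrix.mul_apply]
    exact Finset.sum_nonneg fun l _ => mul_nonneg (ih j l) (hC l k)

lemma abs_entry_pow_le {A C : Matrix (Fin N) (Fin N) ℝ} (h : ∀ j k, |A j k| ≤ C j k) :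
    ∀ (m : ℕ) (j k : Fin N), |(A ^ m) j k| ≤ (C ^ m) j k := by
  have hC : ∀ j k, 0 ≤ C j k := fun j k => le_trans (abs_nonneg _) (h j k)
  intro m
  induction m with
  | zero => intro j k; rw [pow_zero, pow_zero]; by_cases hjk : j = k <;> simp [Matrix.one_apply, hjk]
  | succ m ih =>
    intro j k
    rw [pow_succ, pow_succ, Matrix.mul_apply, Matrix.mul_apply]
    calc |∑ l, (A ^ m) j l * A l k| ≤ ∑ l, |(A ^ m) j l * A l k| := Finset.abs_sum_le_sum_abs _ _
    _ ≤ ∑ l, (C ^ m) j l * C l k := by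
        refine Finset.sum_le_sum fun l _ => ?_
        rw [abs_mul]
        exact mul_le_mul (ih j l) (h l k) (abs_nonneg _) (pow_nonneg_entries hC m j l)

lemma norm_le_norm_entry {X Y : Matrix (Fin N) (Fin N) ℂ} (h : ∀ j k, ‖X j k‖ ≤ ‖Y j k‖) :
    ‖X‖ ≤ ‖Y‖ := by
  rw [Matrix.linfty_opNorm_def, Matrix.linfty_opNorm_def]
  have : ((Finset.univ : Finset (Fin N)).sup fun i => ∑ j, ‖X i j‖₊)
      ≤ ((Finset.univ : Finset (Fin N)).sup fun i => ∑ j, ‖Y i j‖₊) := by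
    refine Finset.sup_mono_fun fun i _ => Finset.sum_le_sum fun j _ => ?_
    rw [← NNReal.coe_le_coe]
    exact h i j
  exact_mod_cast this

lemma norm_Mc_le {A C : Matrix (Fin N) (Fin N) ℝ} (h : ∀ j k, |A j k| ≤ C j k) :
    ‖Mc A‖ ≤ ‖Mc C‖ := by
  refine norm_le_norm_entry fun j k => ?_
  rw [Mc_apply, Mc_apply, Complex.norm_eq_abs, Complex.abs_ofReal, Complex.norm_eq_abs,
    Complex.abs_ofReal]
  rw [abs_of_nonneg (le_trans (abs_nonneg _) (h j k))]
  exact h j k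

lemma specRad_mono (hN : 0 < N) {A C : Matrix (Fin N) (Fin N) ℝ} (h : ∀ j k, |A j k| ≤ C j k) :
    specRad N A ≤ specRad N C := by
  have hle : ∀ m : ℕ, (‖(Mc A) ^ m‖₊ : ℝ≥0∞) ^ (1 / (m : ℝ))
      ≤ (‖(Mc C) ^ m‖₊ : ℝ≥0∞) ^ (1 / (m : ℝ)) := by
    intro m
    refine ENNReal.rpow_le_rpow ?_ (by positivity)
    rw [Mc_pow, Mc_pow]
    have := norm_Mc_le (abs_entry_pow_le h m)
    exact_mod_cast ENNReal.coe_le_coe.mpr (by exact_mod_cast this)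
  have := le_of_tendsto_of_tendsto' (gelfand hN A) (gelfand hN C) hle
  exact (ENNReal.ofReal_le_ofReal_iff (specRad_nonneg hN C)).mp this

lemma spec_smul_mem {A : Matrix (Fin N) (Fin N) ℝ} {c : ℝ} (hc : c ≠ 0) {μ : ℂ}
    (hμ : μ ∈ spectrum ℂ (Mc A)) : (c : ℂ) * μ ∈ spectrum ℂ (Mc (c • A)) := by
  have hM : Mc (c • A) = (c : ℂ) • Mc A := by
    ext j k; simp [Mc_apply, Matrix.smul_apply]
  rw [hM]
  have hcc : (c : ℂ) ≠ 0 := by exact_mod_cast hc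
  have h2 := spectrum.unit_smul_eq_smul (Mc A) (Units.mk0 (c : ℂ) hcc)
  rw [Units.smul_def] at h2
  rw [Units.val_mk0] at h2
  rw [h2]
  exact ⟨μ, hμ, by simp [Units.smul_def]⟩

lemma specRad_smul (hN : 0 < N) (A : Matrix (Fin N) (Fin N) ℝ) {c : ℝ} (hc : 0 < c) :
    specRad N (c • A) = c * specRad N A := by
  apply le_antisymm
  · obtain ⟨ν, hν, he⟩ := exists_abs_eq hN (c • A)
    have h4 := spec_smul_mem (c := c⁻¹) (inv_ne_zero hc.ne') hν
    rw [smul_smul, inv_mul_cancel₀ hc.ne', one_smul] at h4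
    have h3 := abs_le_specRad h4
    rw [_root_.map_mul, Complex.abs_ofReal, abs_of_pos (by positivity)] at h3
    rw [← he]
    have h5 := mul_le_mul_of_nonneg_left h3 hc.le
    rw [← mul_assoc, mul_inv_cancel₀ hc.ne', one_mul] at h5
    exact h5
  · obtain ⟨μ, hμ, he⟩ := exists_abs_eq hN A
    have h2 := spec_smul_mem (c := c) hc.ne' hμ
    have h3 := abs_le_specRad h2
    rw [_root_.map_mul, Complex.abs_ofReal, abs_of_pos hc, he] at h3
    exact h3

lemma sum_row_le_norm {X : Matrix (Fin N) (Fin N) ℝ} (hX : ∀ j k, 0 ≤ X j k) (j : Fin N) :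
    ∑ k, X j k ≤ ‖Mc X‖ := by
  rw [Matrix.linfty_opNorm_def]
  have h1 : ∑ k, ‖Mc X j k‖₊ ≤ ((Finset.univ : Finset (Fin N)).sup fun i => ∑ k, ‖Mc X i k‖₊) :=
    Finset.le_sup (f := fun i => ∑ k, ‖Mc X i k‖₊) (Finset.mem_univ j)
  have h2 : ((∑ k, ‖Mc X j k‖₊ : ℝ≥0) : ℝ) = ∑ k, X j k := by
    push_cast
    refine Finset.sum_congr rfl fun k _ => ?_
    rw [Mc_apply, Complex.norm_eq_abs, Complex.abs_ofReal, abs_of_nonneg (hX j k)]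
  rw [← h2]
  exact_mod_cast h1

lemma le_specRad_of_mulVec (hN : 0 < N) {A : Matrix (Fin N) (Fin N) ℝ}
    (hA : ∀ j k, 0 ≤ A j k) {u : Fin N → ℝ} (hu : ∀ j, 0 ≤ u j) (hune : u ≠ 0)
    {t : ℝ} (ht : 0 ≤ t) (h : ∀ j, t * u j ≤ (A *ᵥ u) j) : t ≤ specRad N A := by
  -- iterate the inequality
  have key : ∀ (m : ℕ) (j : Fin N), t ^ m * u j ≤ (A ^ m *ᵥ u) j := by
    intro m
    induction m with
    | zero => intro j; simp [Matrix.one_mulVec]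
    | succ m ih =>
      intro j
      have h1 : (A ^ (m + 1) *ᵥ u) j = (A *ᵥ (A ^ m *ᵥ u)) j := by
        rw [Matrix.mulVec_mulVec, ← pow_succ']
      rw [h1]
      have h2 : (A *ᵥ (A ^ m *ᵥ u)) j = ∑ k, A j k * (A ^ m *ᵥ u) k := rfl
      have h3 : (A *ᵥ u) j = ∑ k, A j k * u k := rfl
      calc t ^ (m + 1) * u j = t ^ m * (t * u j) := by ring
      _ ≤ t ^ m * (A *ᵥ u) j := by
          have := h j
          nlinarith [pow_nonneg ht m]
      _ = ∑ k, t ^ m * (A j k * u k) := by rw [h3, Finset.mul_sum]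
      _ ≤ ∑ k, A j k * (A ^ m *ᵥ u) k := by
          refine Finset.sum_le_sum fun k _ => ?_
          have := ih k
          nlinarith [hA j k, hu k, pow_nonneg ht m]
      _ = (A *ᵥ (A ^ m *ᵥ u)) j := h2.symm
  -- pick the index with maximal u
  obtain ⟨j₀, _, hj₀⟩ := Finset.exists_max_image (Finset.univ : Finset (Fin N)) u
    ⟨⟨0, hN⟩, Finset.mem_univ _⟩
  have hj₀pos : 0 < u j₀ := by
    obtain ⟨k, hk⟩ := Function.ne_iff.mp hune
    exact lt_of_lt_of_le (lt_of_le_of_ne (hu k) (Ne.symm hk)) (hj₀ k (Finset.mem_univ k))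
  have hrow : ∀ m : ℕ, t ^ m ≤ ∑ k, (A ^ m) j₀ k := by
    intro m
    have h1 := key m j₀
    have h2 : (A ^ m *ᵥ u) j₀ = ∑ k, (A ^ m) j₀ k * u k := rfl
    have h3 : ∑ k, (A ^ m) j₀ k * u k ≤ (∑ k, (A ^ m) j₀ k) * u j₀ := by
      rw [Finset.sum_mul]
      refine Finset.sum_le_sum fun k _ => ?_
      have := hj₀ k (Finset.mem_univ k)
      nlinarith [pow_nonneg_entries hA m j₀ k, hu k]
    have := le_trans (h2 ▸ h1) h3
    have hpos := hj₀pos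
    nlinarith
  -- convert to norm bound and use Gelfand
  have hnorm : ∀ m : ℕ, t ^ m ≤ ‖(Mc A) ^ m‖ := by
    intro m
    rw [Mc_pow]
    exact le_trans (hrow m) (sum_row_le_norm (pow_nonneg_entries hA m) j₀)
  have hEn : ∀ᶠ m : ℕ in atTop, ENNReal.ofReal t ≤ (‖(Mc A) ^ m‖₊ : ℝ≥0∞) ^ (1 / (m : ℝ)) := by
    filter_upwards [eventually_ge_atTop 1] with m hm
    have hm0 : (m : ℝ) ≠ 0 := by positivity
    have h1 : ENNReal.ofReal t = (ENNReal.ofReal (t ^ m)) ^ (1 / (m : ℝ)) := by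
      rw [ENNReal.ofReal_pow ht, ← ENNReal.rpow_natCast, ← ENNReal.rpow_mul,
        mul_one_div, div_self hm0, ENNReal.rpow_one]
    rw [h1]
    refine ENNReal.rpow_le_rpow ?_ (by positivity)
    rw [← ofReal_norm_eq_coe_nnnorm]
    exact ENNReal.ofReal_le_ofReal (hnorm m)
  have := ge_of_tendsto (gelfand hN A) hEn
  exact (ENNReal.ofReal_le_ofReal_iff (specRad_nonneg hN A)).mp this

lemma entry_norm_le (X : Matrix (Fin N) (Fin N) ℂ) (j k : Fin N) : ‖X j k‖ ≤ ‖X‖ := by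
  rw [Matrix.linfty_opNorm_def]
  have h1 : ‖X j k‖₊ ≤ ∑ l, ‖X j l‖₊ :=
    Finset.single_le_sum (f := fun l => ‖X j l‖₊) (fun _ _ => zero_le) (Finset.mem_univ k)
  have h2 : (∑ l, ‖X j l‖₊) ≤ Finset.univ.sup fun i => ∑ l, ‖X i l‖₊ :=
    Finset.le_sup (f := fun i => ∑ l, ‖X i l‖₊) (Finset.mem_univ j)
  exact_mod_cast le_trans h1 h2

noncomputable def entryCLM (j k : Fin N) : Matrix (Fin N) (Fin N) ℂ →L[ℂ] ℂ :=
  LinearMap.mkContinuous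
    { toFun := fun X => X j k
      map_add' := fun X Y => rfl
      map_smul' := fun c X => rfl } 1
    (fun X => by rw [one_mul]; exact entry_norm_le X j k)

lemma entryCLM_apply (j k : Fin N) (X : Matrix (Fin N) (Fin N) ℂ) :
    entryCLM j k X = X j k := rfl

lemma ev_norm_pow_le (hN : 0 < N) (A : Matrix (Fin N) (Fin N) ℝ) {t' : ℝ}
    (h : specRad N A < t') : ∀ᶠ m : ℕ in atTop, ‖(Mc A) ^ m‖ ≤ t' ^ m := by
  have ht'0 : 0 < t' := lt_of_le_of_lt (specRad_nonneg hN A) h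
  have hlt : ENNReal.ofReal (specRad N A) < ENNReal.ofReal t' :=
    (ENNReal.ofReal_lt_ofReal_iff ht'0).mpr h
  filter_upwards [(gelfand hN A).eventually_lt_const hlt, eventually_ge_atTop 1] with m hm hm1
  have hm0 : (m : ℝ) ≠ 0 := by positivity
  have h2 : (((‖(Mc A) ^ m‖₊ : ℝ≥0∞) ^ (1 / (m : ℝ))) ^ (m : ℝ))
      < (ENNReal.ofReal t') ^ (m : ℝ) :=
    ENNReal.rpow_lt_rpow hm (by positivity)
  rw [← ENNReal.rpow_mul, one_div, inv_mul_cancel₀ hm0, ENNReal.rpow_one] at h2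
  have h3 : (ENNReal.ofReal t') ^ (m : ℝ) = ENNReal.ofReal (t' ^ m) := by
    rw [ENNReal.ofReal_rpow_of_pos ht'0, Real.rpow_natCast]
  rw [h3, ← ofReal_norm_eq_coe_nnnorm] at h2
  exact le_of_lt ((ENNReal.ofReal_lt_ofReal_iff_of_nonneg (norm_nonneg _)).mp h2)

/-- The resolvent series. -/
noncomputable def resv (A : Matrix (Fin N) (Fin N) ℝ) (z : ℂ) : Matrix (Fin N) (Fin N) ℂ :=
  ∑' k : ℕ, z⁻¹ ^ (k + 1) • (Mc A) ^ k

lemma summable_res_norm (hN : 0 < N) (A : Matrix (Fin N) (Fin N) ℝ) {z : ℂ}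
    (hz : specRad N A < Complex.abs z) :
    Summable (fun k : ℕ => ((specRad N A + Complex.abs z) / 2 / Complex.abs z) ^ k
      * (Complex.abs z)⁻¹) ∧
    ∀ᶠ k : ℕ in atTop, ‖z⁻¹ ^ (k + 1) • (Mc A) ^ k‖
      ≤ ((specRad N A + Complex.abs z) / 2 / Complex.abs z) ^ k * (Complex.abs z)⁻¹ := by
  set ρ := specRad N A with hρdef
  set az := Complex.abs z with hazdef
  have hρ0 : 0 ≤ ρ := specRad_nonneg hN A
  have haz : 0 < az := lt_of_le_of_lt hρ0 hz
  have ht1 : ρ < (ρ + az) / 2 := by linarith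
  have ht2 : (ρ + az) / 2 < az := by linarith
  have ht'0 : 0 < (ρ + az) / 2 := lt_of_le_of_lt hρ0 ht1
  constructor
  · apply Summable.mul_right
    apply summable_geometric_of_lt_one (by positivity)
    rw [div_lt_one haz]; exact ht2
  · filter_upwards [ev_norm_pow_le hN A ht1] with k hk
    have h1 : ‖z⁻¹ ^ (k + 1) • (Mc A) ^ k‖ = (az⁻¹) ^ (k + 1) * ‖(Mc A) ^ k‖ := by
      rw [norm_smul, norm_pow, norm_inv, Complex.norm_eq_abs]
    rw [h1]
    have h2 : (az⁻¹) ^ (k + 1) * ‖(Mc A) ^ k‖ ≤ (az⁻¹) ^ (k + 1) * ((ρ + az) / 2) ^ k :=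
      mul_le_mul_of_nonneg_left hk (by positivity)
    refine le_trans h2 (le_of_eq ?_)
    rw [div_pow ((ρ + az) / 2) az k, pow_succ]
    ring

lemma summable_res (hN : 0 < N) (A : Matrix (Fin N) (Fin N) ℝ) {z : ℂ}
    (hz : specRad N A < Complex.abs z) :
    Summable (fun k : ℕ => z⁻¹ ^ (k + 1) • (Mc A) ^ k) := by
  obtain ⟨h1, h2⟩ := summable_res_norm hN A hz
  exact Summable.of_norm_bounded_eventually_nat h1 h2

lemma summable_res_norm' (hN : 0 < N) (A : Matrix (Fin N) (Fin N) ℝ) {z : ℂ}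
    (hz : specRad N A < Complex.abs z) :
    Summable (fun k : ℕ => ‖z⁻¹ ^ (k + 1) • (Mc A) ^ k‖) := by
  obtain ⟨h1, h2⟩ := summable_res_norm hN A hz
  apply Summable.of_norm_bounded_eventually_nat h1
  simpa using h2

lemma res_partial_left (A : Matrix (Fin N) (Fin N) ℝ) {z : ℂ} (hz0 : z ≠ 0) (n : ℕ) :
    ((z • 1 - Mc A) * ∑ k ∈ Finset.range n, z⁻¹ ^ (k + 1) • (Mc A) ^ k)
      = 1 - z⁻¹ ^ n • (Mc A) ^ n := by
  induction n with
  | zero => simp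
  | succ n ih =>
    rw [Finset.sum_range_succ, mul_add, ih]
    have hzz : z⁻¹ ^ (n + 1) * z = z⁻¹ ^ n := by
      rw [pow_succ, mul_assoc, inv_mul_cancel₀ hz0, mul_one]
    have key : (z • 1 - Mc A) * (z⁻¹ ^ (n + 1) • (Mc A) ^ n)
        = z⁻¹ ^ n • (Mc A) ^ n - z⁻¹ ^ (n + 1) • (Mc A) ^ (n + 1) := by
      calc (z • 1 - Mc A) * (z⁻¹ ^ (n + 1) • (Mc A) ^ n)
          = z⁻¹ ^ (n + 1) • ((z • 1 - Mc A) * (Mc A) ^ n) := mul_smul_comm _ _ _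
        _ = z⁻¹ ^ (n + 1) • (z • (Mc A) ^ n - (Mc A) ^ (n + 1)) := by
            rw [sub_mul, smul_mul_assoc, one_mul, ← pow_succ']
        _ = (z⁻¹ ^ (n + 1) * z) • (Mc A) ^ n - z⁻¹ ^ (n + 1) • (Mc A) ^ (n + 1) := by
            rw [smul_sub, smul_smul]
        _ = z⁻¹ ^ n • (Mc A) ^ n - z⁻¹ ^ (n + 1) • (Mc A) ^ (n + 1) := by rw [hzz]
    rw [key]
    abel

lemma res_partial_right (A : Matrix (Fin N) (Fin N) ℝ) {z : ℂ} (hz0 : z ≠ 0) (n : ℕ) :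
    ((∑ k ∈ Finset.range n, z⁻¹ ^ (k + 1) • (Mc A) ^ k) * (z • 1 - Mc A))
      = 1 - z⁻¹ ^ n • (Mc A) ^ n := by
  induction n with
  | zero => simp
  | succ n ih =>
    rw [Finset.sum_range_succ, add_mul, ih]
    have hzz : z⁻¹ ^ (n + 1) * z = z⁻¹ ^ n := by
      rw [pow_succ, mul_assoc, inv_mul_cancel₀ hz0, mul_one]
    have key : (z⁻¹ ^ (n + 1) • (Mc A) ^ n) * (z • 1 - Mc A)
        = z⁻¹ ^ n • (Mc A) ^ n - z⁻¹ ^ (n + 1) • (Mc A) ^ (n + 1) := by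
      calc (z⁻¹ ^ (n + 1) • (Mc A) ^ n) * (z • 1 - Mc A)
          = z⁻¹ ^ (n + 1) • ((Mc A) ^ n * (z • 1 - Mc A)) := smul_mul_assoc _ _ _
        _ = z⁻¹ ^ (n + 1) • (z • (Mc A) ^ n - (Mc A) ^ (n + 1)) := by
            rw [mul_sub, mul_smul_comm, mul_one, ← pow_succ]
        _ = (z⁻¹ ^ (n + 1) * z) • (Mc A) ^ n - z⁻¹ ^ (n + 1) • (Mc A) ^ (n + 1) := by
            rw [smul_sub, smul_smul]
        _ = z⁻¹ ^ n • (Mc A) ^ n - z⁻¹ ^ (n + 1) • (Mc A) ^ (n + 1) := by rw [hzz]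
    rw [key]
    abel

lemma tail_tendsto_zero (hN : 0 < N) (A : Matrix (Fin N) (Fin N) ℝ) {z : ℂ}
    (hz : specRad N A < Complex.abs z) :
    Tendsto (fun n : ℕ => z⁻¹ ^ n • (Mc A) ^ n) atTop (𝓝 0) := by
  set ρ := specRad N A
  set az := Complex.abs z
  have hρ0 : 0 ≤ ρ := specRad_nonneg hN A
  have haz : 0 < az := lt_of_le_of_lt hρ0 hz
  have ht1 : ρ < (ρ + az) / 2 := by linarith
  have ht2 : (ρ + az) / 2 < az := by linarith
  refine squeeze_zero_norm' (a := fun n : ℕ => ((ρ + az) / 2 / az) ^ n) ?_ ?_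
  · filter_upwards [ev_norm_pow_le hN A ht1] with n hn
    have h1 : ‖z⁻¹ ^ n • (Mc A) ^ n‖ = (az⁻¹) ^ n * ‖(Mc A) ^ n‖ := by
      rw [norm_smul, norm_pow, norm_inv, Complex.norm_eq_abs]
    rw [h1, div_pow]
    have := mul_le_mul_of_nonneg_left hn (a := (az⁻¹) ^ n) (by positivity)
    refine le_trans this (le_of_eq ?_)
    rw [inv_pow]
    field_simp
  · apply tendsto_pow_atTop_nhds_zero_of_lt_one (by positivity)
    rw [div_lt_one haz]; exact ht2

lemma res_mul (hN : 0 < N) (A : Matrix (Fin N) (Fin N) ℝ) {z : ℂ}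
    (hz : specRad N A < Complex.abs z) :
    (z • 1 - Mc A) * resv A z = 1 ∧ resv A z * (z • 1 - Mc A) = 1 := by
  have hρ0 : 0 ≤ specRad N A := specRad_nonneg hN A
  have haz : 0 < Complex.abs z := lt_of_le_of_lt hρ0 hz
  have hz0 : z ≠ 0 := by
    intro h; rw [h] at haz; simp at haz
  have hS := (summable_res hN A hz).hasSum
  have hpart : Tendsto (fun n : ℕ => ∑ k ∈ Finset.range n, z⁻¹ ^ (k + 1) • (Mc A) ^ k)
      atTop (𝓝 (resv A z)) := hS.tendsto_sum_nat
  have htail : Tendsto (fun n : ℕ => (1 : Matrix (Fin N) (Fin N) ℂ) - z⁻¹ ^ n • (Mc A) ^ n)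
      atTop (𝓝 1) := by
    have := (tail_tendsto_zero hN A hz).const_sub (1 : Matrix (Fin N) (Fin N) ℂ)
    simpa using this
  constructor
  · have h1 : Tendsto (fun n : ℕ =>
        (z • 1 - Mc A) * ∑ k ∈ Finset.range n, z⁻¹ ^ (k + 1) • (Mc A) ^ k)
        atTop (𝓝 ((z • 1 - Mc A) * resv A z)) := hpart.const_mul _
    have h2 : (fun n : ℕ =>
        (z • 1 - Mc A) * ∑ k ∈ Finset.range n, z⁻¹ ^ (k + 1) • (Mc A) ^ k)
        = fun n : ℕ => (1 : Matrix (Fin N) (Fin N) ℂ) - z⁻¹ ^ n • (Mc A) ^ n := by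
      funext n; exact res_partial_left A hz0 n
    rw [h2] at h1
    exact tendsto_nhds_unique h1 htail
  · have h1 : Tendsto (fun n : ℕ =>
        (∑ k ∈ Finset.range n, z⁻¹ ^ (k + 1) • (Mc A) ^ k) * (z • 1 - Mc A))
        atTop (𝓝 (resv A z * (z • 1 - Mc A))) := hpart.mul_const _
    have h2 : (fun n : ℕ =>
        (∑ k ∈ Finset.range n, z⁻¹ ^ (k + 1) • (Mc A) ^ k) * (z • 1 - Mc A))
        = fun n : ℕ => (1 : Matrix (Fin N) (Fin N) ℂ) - z⁻¹ ^ n • (Mc A) ^ n := by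
      funext n; exact res_partial_right A hz0 n
    rw [h2] at h1
    exact tendsto_nhds_unique h1 htail

lemma resv_entry (hN : 0 < N) (A : Matrix (Fin N) (Fin N) ℝ) {z : ℂ}
    (hz : specRad N A < Complex.abs z) (j k : Fin N) :
    resv A z j k = ∑' m : ℕ, z⁻¹ ^ (m + 1) * ((A ^ m) j k : ℂ) := by
  have h1 := (entryCLM j k).map_tsum (summable_res hN A hz)
  have h2 : resv A z j k = entryCLM j k (resv A z) := rfl
  rw [h2, resv, h1]
  congr 1
  funext m
  rw [(entryCLM j k).map_smul, entryCLM_apply, smul_eq_mul, Mc_pow, Mc_apply]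

lemma resv_norm_le (hN : 0 < N) (A : Matrix (Fin N) (Fin N) ℝ) (hA : ∀ j k, 0 ≤ A j k)
    {z : ℂ} (hz : specRad N A < Complex.abs z) :
    ‖resv A z‖ ≤ ‖resv A ((Complex.abs z : ℝ) : ℂ)‖ := by
  set t : ℝ := Complex.abs z with htdef
  have ht0 : 0 < t := lt_of_le_of_lt (specRad_nonneg hN A) hz
  have hzt : specRad N A < Complex.abs ((t : ℝ) : ℂ) := by
    rw [Complex.abs_ofReal, abs_of_pos ht0]; exact hz
  refine norm_le_norm_entry fun j k => ?_
  -- the real entry series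
  set g : ℕ → ℝ := fun m => t⁻¹ ^ (m + 1) * (A ^ m) j k with hgdef
  have hg_eq : ∀ m : ℕ, ‖z⁻¹ ^ (m + 1) * ((A ^ m) j k : ℂ)‖ = g m := by
    intro m
    rw [norm_mul, norm_pow, norm_inv, Complex.norm_eq_abs, Complex.norm_eq_abs,
      Complex.abs_ofReal, abs_of_nonneg (pow_nonneg_entries hA m j k)]
  have hsum_entry : Summable (fun m : ℕ => z⁻¹ ^ (m + 1) * ((A ^ m) j k : ℂ)) := by
    have h2 := summable_res hN A hz
    have := (entryCLM j k).summable h2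
    simpa only [ContinuousLinearMap.map_smul, entryCLM_apply, smul_eq_mul, Mc_pow, Mc_apply] using this
  have hsum_g : Summable g := by
    have h2 := summable_res_norm' hN A hz
    refine Summable.of_nonneg_of_le (fun m => ?_) (fun m => ?_) h2
    · exact mul_nonneg (by positivity) (pow_nonneg_entries hA m j k)
    · rw [← hg_eq m]
      calc ‖z⁻¹ ^ (m + 1) * ((A ^ m) j k : ℂ)‖
          = ‖(z⁻¹ ^ (m + 1) • (Mc A) ^ m) j k‖ := by
            rw [Matrix.smul_apply, smul_eq_mul, Mc_pow, Mc_apply]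
      _ ≤ ‖z⁻¹ ^ (m + 1) • (Mc A) ^ m‖ := entry_norm_le _ j k
  -- identify the entries of resv at the real point t
  have hrt : resv A ((t : ℝ) : ℂ) j k = ((∑' m : ℕ, g m : ℝ) : ℂ) := by
    rw [resv_entry hN A hzt j k, Complex.ofReal_tsum]
    congr 1
    funext m
    rw [hgdef]
    push_cast
    ring
  have h5 : ‖resv A z j k‖ ≤ ∑' m, g m := by
    rw [resv_entry hN A hz j k]
    refine le_trans (norm_tsum_le_tsum_norm ?_) ?_
    · simpa only [hg_eq] using hsum_g
    · exact le_of_eq (by simp only [hg_eq])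
  refine le_trans h5 ?_
  rw [hrt, Complex.norm_eq_abs, Complex.abs_ofReal]
  exact le_abs_self _

lemma specRad_mem (hN : 0 < N) (A : Matrix (Fin N) (Fin N) ℝ) (hA : ∀ j k, 0 ≤ A j k) :
    ((specRad N A : ℝ) : ℂ) ∈ spectrum ℂ (Mc A) := by
  haveI : Nonempty (Fin N) := ⟨⟨0, hN⟩⟩
  obtain ⟨μ, hμ, hab⟩ := exists_abs_eq hN A
  rcases eq_or_lt_of_le (specRad_nonneg hN A) with h0 | hpos
  · have hμ0 : μ = 0 := by
      have h1 : Complex.abs μ = 0 := by rw [hab, ← h0]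
      simpa using h1
    rw [← h0, Complex.ofReal_zero, ← hμ0]
    exact hμ
  · set ρ := specRad N A with hρdef
    by_contra hmem
    have hu : IsUnit ((ρ : ℂ) • (1 : Matrix (Fin N) (Fin N) ℂ) - Mc A) := by
      by_contra h
      apply hmem
      rw [spectrum.mem_iff, Algebra.algebraMap_eq_smul_one]
      exact h
    set F : ℝ → Matrix (Fin N) (Fin N) ℂ := fun s => (s : ℂ) • 1 - Mc A with hFdef
    have hFcont : Continuous F :=
      (Complex.continuous_ofReal.smul continuous_const).sub continuous_const
    have hinv : ContinuousAt Ring.inverse (F ρ) := by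
      have := NormedRing.inverse_continuousAt hu.unit
      rwa [IsUnit.unit_spec] at this
    have htend : Tendsto (fun s => ‖Ring.inverse (F s)‖) (𝓝 ρ) (𝓝 ‖Ring.inverse (F ρ)‖) :=
      (hinv.comp hFcont.continuousAt).norm
    set K := ‖Ring.inverse (F ρ)‖ with hKdef
    have hK0 : 0 ≤ K := norm_nonneg _
    have hKev : ∀ᶠ s in 𝓝 ρ, ‖Ring.inverse (F s)‖ < K + 1 :=
      htend.eventually_lt_const (lt_add_one K)
    obtain ⟨d, hd0, hball⟩ := Metric.eventually_nhds_iff.mp hKev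
    set η := min (d / 2) (1 / (2 * (K + 1))) with hηdef
    have hη0 : 0 < η := lt_min (by linarith) (by positivity)
    set t := ρ + η with htdef
    have htρ : ρ < t := by simp only [htdef]; linarith
    have ht0 : 0 < t := lt_of_le_of_lt (specRad_nonneg hN A) htρ
    have hdist : dist t ρ < d := by
      rw [Real.dist_eq, htdef]
      have : |ρ + η - ρ| = η := by rw [add_sub_cancel_left, abs_of_pos hη0]
      rw [this]
      calc η ≤ d / 2 := min_le_left _ _
      _ < d := by linarith
    have hKt : ‖Ring.inverse (F t)‖ < K + 1 := hball hdist
    -- the point z on the circle of radius t through μ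
    set z : ℂ := ((t / ρ : ℝ) : ℂ) * μ with hzdef
    have habsz : Complex.abs z = t := by
      rw [hzdef, _root_.map_mul, Complex.abs_ofReal, abs_of_pos (by positivity), hab]
      rw [div_mul_cancel₀ _ hpos.ne']
    have hzρ : ρ < Complex.abs z := by rw [habsz]; exact htρ
    have htρ' : ρ < Complex.abs ((t : ℝ) : ℂ) := by
      rw [Complex.abs_ofReal, abs_of_pos ht0]; exact htρ
    obtain ⟨hlt, hrt⟩ := res_mul hN A htρ'
    obtain ⟨hlz, hrz⟩ := res_mul hN A hzρ
    -- units
    set ut : (Matrix (Fin N) (Fin N) ℂ)ˣ :=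
      ⟨((t : ℝ) : ℂ) • 1 - Mc A, resv A ((t : ℝ) : ℂ), hlt, hrt⟩ with hutdef
    set uz : (Matrix (Fin N) (Fin N) ℂ)ˣ :=
      ⟨z • 1 - Mc A, resv A z, hlz, hrz⟩ with huzdef
    have hFt : F t = (ut : Matrix (Fin N) (Fin N) ℂ) := rfl
    have hRingt : Ring.inverse (F t) = resv A ((t : ℝ) : ℂ) := by
      rw [hFt, Ring.inverse_unit]
      rfl
    have hnormz : ‖resv A z‖ < K + 1 := by
      have h1 := resv_norm_le hN A hA hzρ
      rw [habsz] at h1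
      rw [hRingt] at hKt
      exact lt_of_le_of_lt h1 hKt
    have hzpos : 0 < ‖resv A z‖ := by
      have h9 : ((uz⁻¹ : (Matrix (Fin N) (Fin N) ℂ)ˣ) : Matrix (Fin N) (Fin N) ℂ) = resv A z := rfl
      have h10 := Units.norm_pos (uz⁻¹)
      rwa [h9] at h10
    -- μ • 1 - Mc A is near the unit uz
    have hdiff : (μ • (1 : Matrix (Fin N) (Fin N) ℂ) - Mc A) - (uz : Matrix (Fin N) (Fin N) ℂ)
        = (μ - z) • 1 := by
      show (μ • (1 : Matrix (Fin N) (Fin N) ℂ) - Mc A) - (z • 1 - Mc A) = (μ - z) • 1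
      rw [sub_smul]
      abel
    have habsdiff : Complex.abs (μ - z) = η := by
      have h1 : μ - z = ((1 - t / ρ : ℝ) : ℂ) * μ := by
        rw [hzdef]; push_cast; ring
      rw [h1, _root_.map_mul, Complex.abs_ofReal, hab]
      have h2 : |1 - t / ρ| = t / ρ - 1 := by
        rw [abs_of_nonpos]
        · ring
        · rw [sub_nonpos, le_div_iff₀ hpos]; nlinarith
      rw [h2, sub_mul, div_mul_cancel₀ _ hpos.ne', one_mul, htdef]
      ring
    have hnear : ‖(μ • (1 : Matrix (Fin N) (Fin N) ℂ) - Mc A) - (uz : Matrix (Fin N) (Fin N) ℂ)‖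
        < ‖((uz⁻¹ : (Matrix (Fin N) (Fin N) ℂ)ˣ) : Matrix (Fin N) (Fin N) ℂ)‖⁻¹ := by
      rw [hdiff, norm_smul, norm_one, mul_one, Complex.norm_eq_abs, habsdiff]
      have huzinv : ((uz⁻¹ : (Matrix (Fin N) (Fin N) ℂ)ˣ) : Matrix (Fin N) (Fin N) ℂ)
          = resv A z := rfl
      rw [huzinv]
      calc η ≤ 1 / (2 * (K + 1)) := min_le_right _ _
      _ < 1 / (K + 1) := by
          apply div_lt_div_of_pos_left one_pos (by positivity)
          linarith
      _ ≤ ‖resv A z‖⁻¹ := by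
          rw [one_div]
          exact inv_anti₀ hzpos hnormz.le
    have hyunit : IsUnit (μ • (1 : Matrix (Fin N) (Fin N) ℂ) - Mc A) :=
      (Units.ofNearby uz _ hnear).isUnit
    have := spectrum.mem_iff.mp hμ
    rw [Algebra.algebraMap_eq_smul_one] at this
    exact this hyunit

lemma exists_eigvec {A : Matrix (Fin N) (Fin N) ℂ} {μ : ℂ} (h : μ ∈ spectrum ℂ A) :
    ∃ v : Fin N → ℂ, v ≠ 0 ∧ A *ᵥ v = μ • v := by
  rw [spectrum.mem_iff] at h
  have hdet : (algebraMap ℂ (Matrix (Fin N) (Fin N) ℂ) μ - A).det = 0 := by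
    by_contra hd
    exact h ((Matrix.isUnit_iff_isUnit_det _).mpr (isUnit_iff_ne_zero.mpr hd))
  obtain ⟨v, hv, hv0⟩ := Matrix.exists_mulVec_eq_zero_iff.mpr hdet
  refine ⟨v, hv, ?_⟩
  have h2 : (algebraMap ℂ (Matrix (Fin N) (Fin N) ℂ) μ - A) *ᵥ v = 0 := hv0
  rw [Matrix.sub_mulVec, Algebra.algebraMap_eq_smul_one, Matrix.smul_mulVec,
    Matrix.one_mulVec, sub_eq_zero] at h2
  exact h2.symm

lemma mulVec_entry (A : Matrix (Fin N) (Fin N) ℂ) (v : Fin N → ℂ) (j : Fin N) :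
    (A *ᵥ v) j = ∑ k, A j k * v k := rfl

lemma mulVec_entry_real (A : Matrix (Fin N) (Fin N) ℝ) (v : Fin N → ℝ) (j : Fin N) :
    (A *ᵥ v) j = ∑ k, A j k * v k := rfl

/-- diagonal inverse -/
lemma diag_inv {δ : Fin N → ℝ} (hδ : ∀ j, 0 < δ j) :
    (Matrix.diagonal δ)⁻¹ = Matrix.diagonal (fun j => (δ j)⁻¹) := by
  apply Matrix.inv_eq_right_inv
  rw [Matrix.diagonal_mul_diagonal]
  have : (fun j => δ j * (δ j)⁻¹) = fun _ => (1 : ℝ) := by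
    funext j; exact mul_inv_cancel₀ (hδ j).ne'
  rw [this, Matrix.diagonal_one]

/-- If the spectral abscissa of M - D is ≥ 0 then the reproduction number is ≥ 1. -/
lemma one_le_rad_of_absc (hN : 0 < N) {M : Matrix (Fin N) (Fin N) ℝ}
    (hM : ∀ j k, 0 ≤ M j k) {δ : Fin N → ℝ} (hδ : ∀ j, 0 < δ j)
    (h : 0 ≤ specAbsc N (M - Matrix.diagonal δ)) :
    1 ≤ specRad N (M * (Matrix.diagonal δ)⁻¹) := by
  rw [diag_inv hδ]
  set Q := M * Matrix.diagonal (fun j => (δ j)⁻¹) with hQdef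
  have hQ : ∀ j k, 0 ≤ Q j k := by
    intro j k; rw [hQdef, Matrix.mul_diagonal]
    exact mul_nonneg (hM j k) (inv_nonneg.mpr (hδ k).le)
  obtain ⟨μ, hμ, he⟩ := exists_re_eq hN (M - Matrix.diagonal δ)
  have hre : 0 ≤ μ.re := by rw [he]; exact h
  obtain ⟨v, hv0, hv⟩ := exists_eigvec hμ
  -- Mc M *ᵥ v = Mc D *ᵥ v + μ • v
  have hMc : Mc (M - Matrix.diagonal δ) = Mc M - Mc (Matrix.diagonal δ) := by
    ext j k
    simp [Mc_apply, Matrix.sub_apply]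
  have hMv : ∀ j, (Mc M *ᵥ v) j = ((δ j : ℂ) + μ) * v j := by
    intro j
    have h1 : (Mc (M - Matrix.diagonal δ) *ᵥ v) j = μ * v j := by
      rw [hv]; simp [Pi.smul_apply, smul_eq_mul]
    rw [hMc, Matrix.sub_mulVec] at h1
    have h2 : (Mc (Matrix.diagonal δ) *ᵥ v) j = (δ j : ℂ) * v j := by
      have h3 : Mc (Matrix.diagonal δ) = Matrix.diagonal (fun j => (δ j : ℂ)) := by
        rw [Mc, Matrix.diagonal_map (by simp)]
      rw [h3]
      rw [Matrix.mulVec_diagonal]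
    have h4 := h1
    rw [Pi.sub_apply, h2] at h4
    have : (Mc M *ᵥ v) j = μ * v j + (δ j : ℂ) * v j := by linear_combination h4
    rw [this]; ring
  -- the nonnegative vector w
  set u : Fin N → ℝ := fun j => Complex.abs (v j) with hudef
  set w : Fin N → ℝ := fun j => δ j * u j with hwdef
  have hw0 : ∀ j, 0 ≤ w j := fun j => mul_nonneg (hδ j).le (by positivity)
  have hwne : w ≠ 0 := by
    obtain ⟨k, hk⟩ := Function.ne_iff.mp hv0
    intro hcon
    have := congrFun hcon k
    simp only [hwdef, hudef, Pi.zero_apply] at this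
    have huk : Complex.abs (v k) ≠ 0 := by simpa using hk
    exact huk (by
      rcases mul_eq_zero.mp this with h' | h'
      · exact absurd h' (hδ k).ne'
      · exact h')
  have hkey : ∀ j, 1 * w j ≤ (Q *ᵥ w) j := by
    intro j
    rw [one_mul, mulVec_entry_real]
    have hQw : ∀ k, Q j k * w k = M j k * u k := by
      intro k
      rw [hQdef, Matrix.mul_diagonal]
      show M j k * (δ k)⁻¹ * (δ k * u k) = M j k * u k
      rw [mul_assoc, inv_mul_cancel_left₀ (hδ k).ne']
    rw [Finset.sum_congr rfl (fun k _ => hQw k)]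
    have h5 : Complex.abs ((Mc M *ᵥ v) j) ≤ ∑ k, M j k * u k := by
      rw [mulVec_entry]
      refine le_trans (Complex.abs.sum_le _ _) (le_of_eq ?_)
      refine Finset.sum_congr rfl fun k _ => ?_
      rw [_root_.map_mul, Mc_apply, Complex.abs_ofReal, abs_of_nonneg (hM j k)]
    have h6 : Complex.abs ((Mc M *ᵥ v) j) = Complex.abs ((δ j : ℂ) + μ) * u j := by
      rw [hMv j, _root_.map_mul]
    have h7 : δ j + μ.re ≤ Complex.abs ((δ j : ℂ) + μ) := by
      have := Complex.re_le_norm ((δ j : ℂ) + μ)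
      simpa [← Complex.norm_eq_abs] using this
    have h8 : w j ≤ Complex.abs ((δ j : ℂ) + μ) * u j := by
      have h9 : δ j ≤ Complex.abs ((δ j : ℂ) + μ) := by linarith
      have hwj : w j = δ j * u j := rfl
      rw [hwj]
      exact mul_le_mul_of_nonneg_right h9 (Complex.abs.nonneg _)
    rw [h6] at h5
    linarith [h5, h8]
  exact le_specRad_of_mulVec hN hQ hw0 hwne zero_le_one hkey

/-- spectrum shift under adding a real multiple of the identity -/
lemma spec_shift (X : Matrix (Fin N) (Fin N) ℝ) (c : ℝ) (μ : ℂ) :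
    μ ∈ spectrum ℂ (Mc X) ↔ (μ + c) ∈ spectrum ℂ (Mc (X + c • 1)) := by
  have hMc : Mc (X + c • 1) = Mc X + (c : ℂ) • 1 := by
    ext j k
    rw [Mc_apply, Matrix.add_apply, Matrix.add_apply, Matrix.smul_apply, Matrix.smul_apply,
      Mc_apply]
    by_cases h : j = k <;> simp [Matrix.one_apply, h]
  rw [hMc, spectrum.mem_iff, spectrum.mem_iff]
  have : algebraMap ℂ (Matrix (Fin N) (Fin N) ℂ) (μ + c) - (Mc X + (c : ℂ) • 1)
      = algebraMap ℂ (Matrix (Fin N) (Fin N) ℂ) μ - Mc X := by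
    rw [Algebra.algebraMap_eq_smul_one, Algebra.algebraMap_eq_smul_one, add_smul]
    abel
  rw [this]

lemma specAbsc_shift (hN : 0 < N) (X : Matrix (Fin N) (Fin N) ℝ) (c : ℝ) :
    specAbsc N (X + c • 1) = specAbsc N X + c := by
  apply le_antisymm
  · obtain ⟨μ, hμ, he⟩ := exists_re_eq hN (X + c • 1)
    have h2 : (μ - c) ∈ spectrum ℂ (Mc X) := by
      rw [spec_shift X c (μ - c)]
      simpa using hμ
    have h3 := re_le_specAbsc h2
    rw [← he]
    have : (μ - (c : ℂ)).re = μ.re - c := by simp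
    rw [this] at h3
    linarith
  · obtain ⟨μ, hμ, he⟩ := exists_re_eq hN X
    have h2 := (spec_shift X c μ).mp hμ
    have h3 := re_le_specAbsc h2
    have : (μ + (c : ℂ)).re = μ.re + c := by simp
    rw [this, he] at h3
    linarith

lemma specAbsc_eq_specRad (hN : 0 < N) {Y : Matrix (Fin N) (Fin N) ℝ}
    (hY : ∀ j k, 0 ≤ Y j k) : specAbsc N Y = specRad N Y := by
  apply le_antisymm
  · obtain ⟨μ, hμ, he⟩ := exists_re_eq hN Y
    rw [← he]
    exact le_trans (Complex.re_le_norm μ) (abs_le_specRad hμ)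
  · have h1 := specRad_mem hN Y hY
    have h2 := re_le_specAbsc h1
    simpa using h2

/-- If the reproduction number is > 1 then the spectral abscissa of M - D is > 0. -/
lemma absc_pos_of_rad (hN : 0 < N) {M : Matrix (Fin N) (Fin N) ℝ}
    (hM : ∀ j k, 0 ≤ M j k) {δ : Fin N → ℝ} (hδ : ∀ j, 0 < δ j)
    (h : 1 < specRad N (M * (Matrix.diagonal δ)⁻¹)) :
    0 < specAbsc N (M - Matrix.diagonal δ) := by
  haveI : Nonempty (Fin N) := ⟨⟨0, hN⟩⟩
  rw [diag_inv hδ] at h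
  set Q := M * Matrix.diagonal (fun j => (δ j)⁻¹) with hQdef
  have hQ : ∀ j k, 0 ≤ Q j k := by
    intro j k; rw [hQdef, Matrix.mul_diagonal]
    exact mul_nonneg (hM j k) (inv_nonneg.mpr (hδ k).le)
  set r := specRad N Q with hrdef
  have hrspec := specRad_mem hN Q hQ
  obtain ⟨v, hv0, hv⟩ := exists_eigvec hrspec
  -- x = D⁻¹ v satisfies Mc M x = r δ x entrywise
  set x : Fin N → ℂ := fun k => ((δ k : ℝ) : ℂ)⁻¹ * v k with hxdef
  have hxv : ∀ k, v k = (δ k : ℂ) * x k := by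
    intro k
    rw [hxdef]
    have : ((δ k : ℝ) : ℂ) ≠ 0 := by
      simpa using (hδ k).ne'
    field_simp
  have hMx : ∀ j, (Mc M *ᵥ x) j = r * (δ j : ℂ) * x j := by
    intro j
    have h1 : (Mc Q *ᵥ v) j = r * v j := by rw [hv]; simp [Pi.smul_apply, smul_eq_mul, hrdef]
    have h2 : (Mc Q *ᵥ v) j = (Mc M *ᵥ x) j := by
      rw [mulVec_entry, mulVec_entry]
      refine Finset.sum_congr rfl fun k _ => ?_
      have hQc : Mc Q j k = (M j k : ℂ) * ((δ k : ℝ) : ℂ)⁻¹ := by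
        rw [Mc_apply, hQdef, Matrix.mul_diagonal]
        push_cast
        ring
      have hxk : x k = ((δ k : ℝ) : ℂ)⁻¹ * v k := rfl
      rw [hQc, hxk, Mc_apply]
      ring
    rw [h2] at h1
    rw [h1, hxv j]
    ring
  set u : Fin N → ℝ := fun j => Complex.abs (x j) with hudef
  have hu0 : ∀ j, 0 ≤ u j := fun j => by positivity
  have hune : u ≠ 0 := by
    obtain ⟨k, hk⟩ := Function.ne_iff.mp hv0
    intro hcon
    have h3 := congrFun hcon k
    simp only [hudef, Pi.zero_apply] at h3
    have : x k ≠ 0 := by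
      rw [hxdef]
      apply mul_ne_zero
      · simpa using (hδ k).ne'
      · exact hk
    exact this (by simpa using h3)
  -- the shifted nonnegative matrix
  set c : ℝ := ∑ j, δ j with hcdef
  have hc0 : 0 < c := Finset.sum_pos (fun j _ => hδ j) Finset.univ_nonempty
  have hcδ : ∀ j, δ j ≤ c := by
    intro j
    exact Finset.single_le_sum (f := fun j => δ j) (fun k _ => (hδ k).le) (Finset.mem_univ j)
  set Ac : Matrix (Fin N) (Fin N) ℝ := M - Matrix.diagonal δ + c • 1 with hAcdef
  have hAc : ∀ j k, 0 ≤ Ac j k := by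
    intro j k
    rw [hAcdef, Matrix.add_apply, Matrix.sub_apply, Matrix.smul_apply]
    by_cases hjk : j = k
    · subst hjk
      simp only [Matrix.diagonal_apply_eq, Matrix.one_apply_eq, smul_eq_mul, mul_one]
      have := hcδ j
      have := hM j j
      linarith
    · rw [Matrix.diagonal_apply_ne _ hjk, Matrix.one_apply_ne hjk]
      simpa using hM j k
  set δmin : ℝ := Finset.univ.inf' Finset.univ_nonempty δ with hδmindef
  have hδmin0 : 0 < δmin := by
    rw [hδmindef]
    obtain ⟨j, -, hj⟩ := Finset.exists_mem_eq_inf' Finset.univ_nonempty δ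
    rw [hj]; exact hδ j
  have hδminle : ∀ j, δmin ≤ δ j := fun j => Finset.inf'_le _ (Finset.mem_univ j)
  -- key inequality
  have hkey : ∀ j, ((r - 1) * δmin + c) * u j ≤ (Ac *ᵥ u) j := by
    intro j
    have hAcu : (Ac *ᵥ u) j = (∑ k, M j k * u k) - δ j * u j + c * u j := by
      have hterm : ∀ k, Ac j k * u k
          = M j k * u k - (Matrix.diagonal δ) j k * u k
            + (c • (1 : Matrix (Fin N) (Fin N) ℝ)) j k * u k := by
        intro k
        rw [hAcdef, Matrix.add_apply, Matrix.sub_apply]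
        ring
      have hsum2 : ∑ k, (Matrix.diagonal δ) j k * u k = δ j * u j := by
        rw [Finset.sum_eq_single j]
        · rw [Matrix.diagonal_apply_eq]
        · intro k _ hkj
          rw [Matrix.diagonal_apply_ne _ (Ne.symm hkj), zero_mul]
        · intro hj; exact absurd (Finset.mem_univ j) hj
      have hsum3 : ∑ k, (c • (1 : Matrix (Fin N) (Fin N) ℝ)) j k * u k = c * u j := by
        rw [Finset.sum_eq_single j]
        · rw [Matrix.smul_apply, Matrix.one_apply_eq, smul_eq_mul, mul_one]
        · intro k _ hkj
          rw [Matrix.smul_apply, Matrix.one_apply_ne (Ne.symm hkj), smul_eq_mul, mul_zero,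
            zero_mul]
        · intro hj; exact absurd (Finset.mem_univ j) hj
      rw [mulVec_entry_real, Finset.sum_congr rfl (fun k _ => hterm k), Finset.sum_add_distrib,
        Finset.sum_sub_distrib, hsum2, hsum3]
    have h5 : Complex.abs ((Mc M *ᵥ x) j) ≤ ∑ k, M j k * u k := by
      rw [mulVec_entry]
      refine le_trans (Complex.abs.sum_le _ _) (le_of_eq ?_)
      refine Finset.sum_congr rfl fun k _ => ?_
      rw [_root_.map_mul, Mc_apply, Complex.abs_ofReal, abs_of_nonneg (hM j k)]
    have h6 : Complex.abs ((Mc M *ᵥ x) j) = r * δ j * u j := by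
      rw [hMx j, _root_.map_mul, _root_.map_mul]
      have hr0 : (0 : ℝ) ≤ r := specRad_nonneg hN Q
      have ha1 : Complex.abs ((r : ℝ) : ℂ) = r := by rw [Complex.abs_ofReal, abs_of_nonneg hr0]
      have ha2 : Complex.abs ((δ j : ℝ) : ℂ) = δ j := by
        rw [Complex.abs_ofReal, abs_of_pos (hδ j)]
      have ha3 : Complex.abs (x j) = u j := rfl
      rw [ha1, ha2, ha3]
    have hr1 : 1 < r := h
    have h7 : ((r - 1) * δmin + c) * u j ≤ (r - 1) * δ j * u j + c * u j := by
      have hu := hu0 j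
      have hd := hδminle j
      nlinarith [mul_nonneg (mul_nonneg (show (0:ℝ) ≤ r - 1 by linarith)
        (show (0:ℝ) ≤ δ j - δmin by linarith)) hu]
    have h9 : r * δ j * u j ≤ ∑ k, M j k * u k := by rw [← h6]; exact h5
    rw [hAcu]
    linarith
  have hr1 : 1 < r := h
  have hpos0 : (0:ℝ) ≤ (r - 1) * δmin + c := by
    nlinarith [mul_pos (show (0:ℝ) < r - 1 by linarith) hδmin0, hc0]
  have hrad := le_specRad_of_mulVec hN hAc hu0 hune hpos0 hkey
  -- transfer back
  have habsc : specAbsc N Ac = specAbsc N (M - Matrix.diagonal δ) + c := by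
    rw [hAcdef, specAbsc_shift hN]
  have heq := specAbsc_eq_specRad hN hAc
  have h9 : (r - 1) * δmin + c ≤ specAbsc N (M - Matrix.diagonal δ) + c := by
    rw [← habsc, heq]; exact hrad
  nlinarith [mul_pos (show (0:ℝ) < r - 1 by linarith) hδmin0]

lemma Mc_comb (A₀ A₁ : Matrix (Fin N) (Fin N) ℝ) (θ : ℝ) :
    Mc ((1 - θ) • A₀ + θ • A₁) = (1 - θ) • Mc A₀ + θ • Mc A₁ := by
  ext j k
  rw [Mc_apply, Matrix.add_apply, Matrix.add_apply, Matrix.smul_apply, Matrix.smul_apply,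
    Matrix.smul_apply, Matrix.smul_apply, Mc_apply, Mc_apply]
  rw [smul_eq_mul, smul_eq_mul]
  push_cast
  rw [Complex.real_smul, Complex.real_smul]
  push_cast
  ring

lemma specRad_continuousOn (hN : 0 < N) (A₀ A₁ : Matrix (Fin N) (Fin N) ℝ)
    (hpos : ∀ θ ∈ Set.Icc (0:ℝ) 1, ∀ j k, 0 ≤ ((1 - θ) • A₀ + θ • A₁) j k) :
    ContinuousOn (fun θ : ℝ => specRad N ((1 - θ) • A₀ + θ • A₁)) (Set.Icc 0 1) := by
  set A : ℝ → Matrix (Fin N) (Fin N) ℝ := fun θ => (1 - θ) • A₀ + θ • A₁ with hAdef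
  set g : ℝ → Matrix (Fin N) (Fin N) ℂ := fun θ => (1 - θ) • Mc A₀ + θ • Mc A₁ with hgdef
  have hg : Continuous g := by
    apply Continuous.add
    · exact (continuous_const.sub continuous_id).smul continuous_const
    · exact continuous_id.smul continuous_const
  have hMg : ∀ θ, Mc (A θ) = g θ := fun θ => Mc_comb A₀ A₁ θ
  intro θ₀ hθ₀
  rw [ContinuousWithinAt, tendsto_order]
  constructor
  · -- lower semicontinuity
    intro b hb
    rcases lt_or_ge b 0 with hb0 | hb0
    · exact Filter.Eventually.of_forall fun θ => lt_of_lt_of_le hb0 (specRad_nonneg hN _)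
    · have hρ0 : 0 < specRad N (A θ₀) := lt_of_le_of_lt hb0 hb
      set ρ₀ := specRad N (A θ₀) with hρdef
      set s : ℝ := (b + ρ₀) / (2 * ρ₀) with hsdef
      have hs0 : 0 < s := by positivity
      have hs1 : s < 1 := by
        rw [hsdef, div_lt_one (by positivity)]
        linarith
      have hsb : b < s * ρ₀ := by
        rw [hsdef, div_mul_eq_mul_div, mul_comm]
        rw [lt_div_iff₀ (by positivity)]
        nlinarith
      have hev : ∀ j k, ∀ᶠ θ in 𝓝[Set.Icc (0:ℝ) 1] θ₀, s * (A θ₀) j k ≤ (A θ) j k := by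
        intro j k
        rcases eq_or_lt_of_le (hpos θ₀ hθ₀ j k) with hz | hp
        · filter_upwards [eventually_mem_nhdsWithin] with θ hθ
          have hz' : (A θ₀) j k = 0 := hz.symm
          rw [hz', mul_zero]
          exact hpos θ hθ j k
        · have hcont : Continuous (fun θ : ℝ => (A θ) j k) := by
            simp only [hAdef, Matrix.add_apply, Matrix.smul_apply, smul_eq_mul]
            fun_prop
          have hlt : s * (A θ₀) j k < (A θ₀) j k := by nlinarith
          have hev2 := (hcont.continuousAt (x := θ₀)).eventually_const_lt hlt
          exact ((hev2.filter_mono nhdsWithin_le_nhds).mono fun θ h => h.le)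
      have hall : ∀ᶠ θ in 𝓝[Set.Icc (0:ℝ) 1] θ₀, ∀ j k, s * (A θ₀) j k ≤ (A θ) j k :=
        Filter.eventually_all.mpr fun j => Filter.eventually_all.mpr fun k => hev j k
      filter_upwards [hall, eventually_mem_nhdsWithin] with θ hθ hθIcc
      have hmono : specRad N (s • A θ₀) ≤ specRad N (A θ) := by
        apply specRad_mono hN
        intro j k
        rw [Matrix.smul_apply, smul_eq_mul, abs_of_nonneg (by
          exact mul_nonneg hs0.le (hpos θ₀ hθ₀ j k))]
        exact hθ j k
      rw [specRad_smul hN _ hs0] at hmono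
      exact lt_of_lt_of_le hsb hmono
  · -- upper semicontinuity
    intro b hb
    set ρ₀ := specRad N (A θ₀) with hρdef
    have hρnn : 0 ≤ ρ₀ := specRad_nonneg hN _
    set y : ℝ := (ρ₀ + b) / 2 with hydef
    have hy1 : ρ₀ < y := by rw [hydef]; linarith
    have hy2 : y < b := by rw [hydef]; linarith
    have hy0 : 0 < y := lt_of_le_of_lt hρnn hy1
    set y' : ℝ := (ρ₀ + y) / 2 with hy'def
    have hy'1 : ρ₀ < y' := by rw [hy'def]; linarith
    have hy'2 : y' < y := by rw [hy'def]; linarith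
    have hy'0 : 0 < y' := lt_of_le_of_lt hρnn hy'1
    obtain ⟨m, hm, hm1⟩ := ((ev_norm_pow_le hN (A θ₀) hy'1).and (eventually_ge_atTop 1)).exists
    have hmlt : ‖(Mc (A θ₀)) ^ m‖ < y ^ m := by
      refine lt_of_le_of_lt hm ?_
      exact pow_lt_pow_left₀ hy'2 hy'0.le (by omega)
    have hcont : Continuous (fun θ : ℝ => ‖(g θ) ^ m‖) := (hg.pow m).norm
    have hev : ∀ᶠ θ in 𝓝 θ₀, ‖(g θ) ^ m‖ < y ^ m := by
      have hca := hcont.continuousAt (x := θ₀)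
      have h9 : ‖(g θ₀) ^ m‖ < y ^ m := by rw [← hMg θ₀]; exact hmlt
      exact hca.eventually_lt_const h9
    filter_upwards [hev.filter_mono nhdsWithin_le_nhds] with θ hθ
    have h1 : specRad N (A θ) ^ m ≤ ‖(Mc (A θ)) ^ m‖ := pow_specRad_le hN (A θ) m
    rw [hMg θ] at h1
    have h2 : specRad N (A θ) ^ m < y ^ m := lt_of_le_of_lt h1 hθ
    have h3 : specRad N (A θ) < y := lt_of_pow_lt_pow_left₀ m hy0.le h2
    exact lt_trans h3 hy2

lemma exists_specRad_eq (hN : 0 < N) (A₀ A₁ : Matrix (Fin N) (Fin N) ℝ)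
    (hpos : ∀ θ ∈ Set.Icc (0:ℝ) 1, ∀ j k, 0 ≤ ((1 - θ) • A₀ + θ • A₁) j k)
    {c : ℝ} (h0 : specRad N A₀ < c) (h1 : c < specRad N A₁) :
    ∃ θ ∈ Set.Icc (0:ℝ) 1, specRad N ((1 - θ) • A₀ + θ • A₁) = c := by
  have hcont := specRad_continuousOn hN A₀ A₁ hpos
  have hiv := intermediate_value_Icc (zero_le_one (α := ℝ)) hcont
  have he0 : (1 - (0:ℝ)) • A₀ + (0:ℝ) • A₁ = A₀ := by simp
  have he1 : (1 - (1:ℝ)) • A₀ + (1:ℝ) • A₁ = A₁ := by simp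
  have hc : c ∈ Set.Icc (specRad N ((1 - (0:ℝ)) • A₀ + (0:ℝ) • A₁))
      (specRad N ((1 - (1:ℝ)) • A₀ + (1:ℝ) • A₁)) := by
    rw [he0, he1]
    exact ⟨h0.le, h1.le⟩
  obtain ⟨θ, hθ, he⟩ := hiv hc
  exact ⟨θ, hθ, he⟩

lemma shift_nonneg {M : Matrix (Fin N) (Fin N) ℝ} (hM : ∀ j k, 0 ≤ M j k) {δ : Fin N → ℝ}
    {c : ℝ} (hc : ∀ j, δ j ≤ c) :
    ∀ j k, 0 ≤ (M - Matrix.diagonal δ + c • 1) j k := by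
  intro j k
  rw [Matrix.add_apply, Matrix.sub_apply, Matrix.smul_apply]
  by_cases hjk : j = k
  · subst hjk
    rw [Matrix.diagonal_apply_eq, Matrix.one_apply_eq, smul_eq_mul, mul_one]
    have := hc j
    have := hM j j
    linarith
  · rw [Matrix.diagonal_apply_ne _ hjk, Matrix.one_apply_ne hjk, smul_eq_mul, mul_zero]
    simpa using hM j k

lemma Bstar_apply (B Bh : Matrix (Fin N) (Fin N) ℝ) (p : Fin N → ℝ) (j k : Fin N) :
    Bstar N B Bh p j k = (1 - p j) * Bh j k + p j * B j k := by
  rw [Bstar, Matrix.add_apply, Matrix.sub_mul, Matrix.sub_apply, one_mul,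
    Matrix.diagonal_mul, Matrix.diagonal_mul]
  ring

end Aux

/-- if R_min < 1 < R_max then the negative, positive, and zero level
sets of Λ on the cube are all nonempty. -/
theorem stmt12 {N : ℕ} (hN : 2 ≤ N) (B Bh : Matrix (Fin N) (Fin N) ℝ) (δ : Fin N → ℝ)
    (hB : ∀ j k, 0 ≤ B j k) (hBirr : MatIrreducible N B)
    (hBh : ∀ j k, 0 ≤ Bh j k) (hz : ∀ j k, B j k = 0 → Bh j k = 0)
    (hδ : ∀ j, 0 < δ j)
    (hRmin : Rmin N B Bh (Matrix.diagonal δ) < 1)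
    (hRmax : 1 < Rmax N B Bh (Matrix.diagonal δ)) :
    (∃ p ∈ cube N, specAbsc N (Bstar N B Bh p - Matrix.diagonal δ) < 0) ∧
    (∃ p ∈ cube N, 0 < specAbsc N (Bstar N B Bh p - Matrix.diagonal δ)) ∧
    (∃ p ∈ cube N, specAbsc N (Bstar N B Bh p - Matrix.diagonal δ) = 0) := by
  have hN0 : 0 < N := by omega
  haveI : Nonempty (Fin N) := ⟨⟨0, hN0⟩⟩
  have hBsnn : ∀ p ∈ cube N, ∀ j k, 0 ≤ Bstar N B Bh p j k := by
    intro p hp j k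
    rw [Bstar_apply]
    obtain ⟨ha, hb⟩ := hp j
    have h3 := hBh j k; have h4 := hB j k
    nlinarith
  have h0cube : (0 : Fin N → ℝ) ∈ cube N := fun j => ⟨le_refl _, zero_le_one⟩
  have hne : (Rnum N B Bh (Matrix.diagonal δ) '' cube N).Nonempty := ⟨_, 0, h0cube, rfl⟩
  have hbdd : BddBelow (Rnum N B Bh (Matrix.diagonal δ) '' cube N) := by
    refine ⟨0, ?_⟩
    rintro r ⟨p, hp, rfl⟩
    exact specRad_nonneg hN0 _
  unfold Rmin at hRmin
  unfold Rmax at hRmax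
  obtain ⟨xlow, ⟨pm, hpm, rfl⟩, hxm⟩ := (csInf_lt_iff hbdd hne).mp hRmin
  obtain ⟨pp, hpp, hxp⟩ : ∃ p ∈ cube N, 1 < Rnum N B Bh (Matrix.diagonal δ) p := by
    by_cases hba : BddAbove (Rnum N B Bh (Matrix.diagonal δ) '' cube N)
    · obtain ⟨x, ⟨p, hp, rfl⟩, hx⟩ := (lt_csSup_iff hba hne).mp hRmax
      exact ⟨p, hp, hx⟩
    · rw [Real.sSup_of_not_bddAbove hba] at hRmax; linarith
  -- part 1: negative abscissa at pm
  have h1 : specAbsc N (Bstar N B Bh pm - Matrix.diagonal δ) < 0 := by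
    by_contra hcon
    push_neg at hcon
    have h2 := one_le_rad_of_absc hN0 (hBsnn pm hpm) hδ hcon
    have h3 : Rnum N B Bh (Matrix.diagonal δ) pm
        = specRad N (Bstar N B Bh pm * (Matrix.diagonal δ)⁻¹) := rfl
    rw [h3] at hxm
    linarith
  -- part 2: positive abscissa at pp
  have h2pos : 0 < specAbsc N (Bstar N B Bh pp - Matrix.diagonal δ) := by
    apply absc_pos_of_rad hN0 (hBsnn pp hpp) hδ
    have h3 : Rnum N B Bh (Matrix.diagonal δ) pp
        = specRad N (Bstar N B Bh pp * (Matrix.diagonal δ)⁻¹) := rfl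
    rw [h3] at hxp
    exact hxp
  -- part 3: the zero level set via IVT
  set c : ℝ := ∑ j, δ j with hcdef
  have hcδ : ∀ j, δ j ≤ c :=
    fun j => Finset.single_le_sum (f := fun j => δ j) (fun k _ => (hδ k).le) (Finset.mem_univ j)
  have habsc_rad : ∀ p ∈ cube N, specAbsc N (Bstar N B Bh p - Matrix.diagonal δ)
      = specRad N (Bstar N B Bh p - Matrix.diagonal δ + c • 1) - c := by
    intro p hp
    have h4 := specAbsc_shift hN0 (Bstar N B Bh p - Matrix.diagonal δ) c
    have h5 := specAbsc_eq_specRad hN0 (shift_nonneg (hBsnn p hp) hcδ)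
    linarith
  have hA0 : specRad N (Bstar N B Bh pm - Matrix.diagonal δ + c • 1) < c := by
    have := habsc_rad pm hpm; linarith
  have hA1 : c < specRad N (Bstar N B Bh pp - Matrix.diagonal δ + c • 1) := by
    have := habsc_rad pp hpp; linarith
  have hcube : ∀ θ ∈ Set.Icc (0:ℝ) 1, (fun j => (1 - θ) * pm j + θ * pp j) ∈ cube N := by
    intro θ hθ j
    obtain ⟨h01, h02⟩ := hθ
    obtain ⟨ha1, ha2⟩ := hpm j
    obtain ⟨hb1, hb2⟩ := hpp j
    constructor
    · show 0 ≤ (1 - θ) * pm j + θ * pp j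
      nlinarith
    · show (1 - θ) * pm j + θ * pp j ≤ 1
      nlinarith
  have hGeq : ∀ θ : ℝ,
      (1 - θ) • (Bstar N B Bh pm - Matrix.diagonal δ + c • 1)
        + θ • (Bstar N B Bh pp - Matrix.diagonal δ + c • 1)
      = Bstar N B Bh (fun j => (1 - θ) * pm j + θ * pp j) - Matrix.diagonal δ + c • 1 := by
    intro θ
    ext j k
    simp only [Matrix.add_apply, Matrix.sub_apply, Matrix.smul_apply, smul_eq_mul]
    rw [Bstar_apply, Bstar_apply, Bstar_apply]
    ring
  have hpath : ∀ θ ∈ Set.Icc (0:ℝ) 1, ∀ j k,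
      0 ≤ ((1 - θ) • (Bstar N B Bh pm - Matrix.diagonal δ + c • 1)
        + θ • (Bstar N B Bh pp - Matrix.diagonal δ + c • 1)) j k := by
    intro θ hθ j k
    rw [hGeq θ]
    exact shift_nonneg (hBsnn _ (hcube θ hθ)) hcδ j k
  obtain ⟨θ, hθ, he⟩ := exists_specRad_eq hN0 _ _ hpath hA0 hA1
  rw [hGeq θ] at he
  refine ⟨⟨pm, hpm, h1⟩, ⟨pp, hpp, h2pos⟩,
    ⟨(fun j => (1 - θ) * pm j + θ * pp j), hcube θ hθ, ?_⟩⟩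
  rw [habsc_rad _ (hcube θ hθ), he]
  ring
end

section
/- Assume B̂ is irreducible, β_{jk} ≥ β̂_{jk} for all j,k, and there are no stubborn agents, i.e., for every j there exists k with β_{jk} > β̂_{jk}. Then for every p ∈ [0,1]^N with p ≠ (1,…,1) one has Λ(p) < Λ(1,…,1), and for every p ∈ [0,1]^N with p ≠ 0 one has Λ(p) > Λ(0). Consequently R_max = R_0 = ρ(B D^{−1}) is attained uniquely at the corner p = (1,…,1) and R_min = R_1 = ρ(B̂ D^{−1}) is attained uniquely at the corner p = 0. The symmetric statements hold when β̂_{jk} ≥ β_{jk} for all j,k with B irreducible and no stubborn agents: then Λ is uniquely maximized at p = 0 with R_max = R_1 and uniquely minimized at p = (1,…,1) with R_min = R_0. -/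
open Matrix Filter Topology

namespace PFaux

attribute [local instance] Matrix.linftyOpNormedRing Matrix.linftyOpNormedAlgebra

variable {N : ℕ}

/-- entrywise nonneg -/
def EntryNN (A : Matrix (Fin N) (Fin N) ℝ) : Prop := ∀ i j, 0 ≤ A i j

lemma EntryNN.mul {A B : Matrix (Fin N) (Fin N) ℝ} (hA : EntryNN A) (hB : EntryNN B) :
    EntryNN (A * B) := fun i j => by
  rw [Matrix.mul_apply]; exact Finset.sum_nonneg fun k _ => mul_nonneg (hA i k) (hB k j)

lemma EntryNN.pow' {A : Matrix (Fin N) (Fin N) ℝ} (hA : EntryNN A) (n : ℕ) (hn : n ≠ 0) :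
    EntryNN (A ^ n) := by
  induction n with
  | zero => exact absurd rfl hn
  | succ m ih =>
    rcases Nat.eq_zero_or_pos m with hm | hm
    · subst hm; simpa [pow_succ] using hA
    · rw [pow_succ]; exact (ih hm.ne').mul hA

lemma mul_le_mul_entry {A B A' B' : Matrix (Fin N) (Fin N) ℝ}
    (hA : EntryNN A) (hB : EntryNN B)
    (hAA : ∀ i j, A i j ≤ A' i j) (hBB : ∀ i j, B i j ≤ B' i j) :
    ∀ i j, (A * B) i j ≤ (A' * B') i j := by
  intro i j
  simp only [Matrix.mul_apply]
  apply Finset.sum_le_sum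
  intro k _
  exact mul_le_mul (hAA i k) (hBB k j) (hB k j) ((hA i k).trans (hAA i k))

lemma pow_le_pow_entry {A A' : Matrix (Fin N) (Fin N) ℝ}
    (hA : EntryNN A) (hAA : ∀ i j, A i j ≤ A' i j) (n : ℕ) (hn : n ≠ 0) :
    ∀ i j, (A ^ n) i j ≤ (A' ^ n) i j := by
  induction n with
  | zero => exact absurd rfl hn
  | succ m ih =>
    rcases Nat.eq_zero_or_pos m with hm | hm
    · subst hm; simpa [pow_succ] using hAA
    · rw [pow_succ, pow_succ]
      exact mul_le_mul_entry (hA.pow' m hm.ne') hA (ih hm.ne') hAA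

/-- irreducibility transfers upward -/
lemma matIrreducible_mono {A A' : Matrix (Fin N) (Fin N) ℝ}
    (hA : EntryNN A) (hAA : ∀ i j, A i j ≤ A' i j)
    (hirr : MatIrreducible N A) : MatIrreducible N A' := by
  intro i j
  obtain ⟨m, hm, hpos⟩ := hirr i j
  exact ⟨m, hm, hpos.trans_le (pow_le_pow_entry hA hAA m hm.ne' i j)⟩

lemma nnnorm_mapC (A : Matrix (Fin N) (Fin N) ℝ) :
    ‖A.map (Complex.ofReal : ℝ → ℂ)‖₊ = Finset.univ.sup fun i => ∑ j, ‖A i j‖₊ := by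
  rw [Matrix.linfty_opNNNorm_def]
  congr 1; funext i; congr 1; funext j
  simp [Matrix.map_apply]

lemma nnnorm_mapC_mono' {A A' : Matrix (Fin N) (Fin N) ℝ}
    (hA : EntryNN A) (hAA : ∀ i j, A i j ≤ A' i j) :
    ‖A.map (Complex.ofReal : ℝ → ℂ)‖ ≤ ‖A'.map (Complex.ofReal : ℝ → ℂ)‖ := by
  have h : ‖A.map (Complex.ofReal : ℝ → ℂ)‖₊ ≤ ‖A'.map (Complex.ofReal : ℝ → ℂ)‖₊ := by
    rw [nnnorm_mapC, nnnorm_mapC]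
    apply Finset.sup_mono_fun
    intro i _
    apply Finset.sum_le_sum
    intro j _
    have h0 := hA i j
    have h1 := hAA i j
    rw [← NNReal.coe_le_coe]
    simpa [Real.nnnorm_of_nonneg h0, Real.nnnorm_of_nonneg (h0.trans h1), abs_of_nonneg h0,
      abs_of_nonneg (h0.trans h1)] using h1
  exact_mod_cast h

lemma row_sum_le_nnnorm (A : Matrix (Fin N) (Fin N) ℝ) (i : Fin N) :
    (∑ j, ‖A i j‖₊) ≤ ‖A.map (Complex.ofReal : ℝ → ℂ)‖₊ := by
  rw [nnnorm_mapC]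
  exact Finset.le_sup (f := fun i => ∑ j, ‖A i j‖₊) (Finset.mem_univ i)

lemma mem_spec_iff (A : Matrix (Fin N) (Fin N) ℂ) (μ : ℂ) :
    μ ∈ spectrum ℂ A ↔ ∃ v ≠ 0, A *ᵥ v = μ • v := by
  rw [spectrum.mem_iff, Matrix.isUnit_iff_isUnit_det, isUnit_iff_ne_zero, not_ne_iff,
    ← Matrix.exists_mulVec_eq_zero_iff]
  have key : ∀ v, (algebraMap ℂ (Matrix (Fin N) (Fin N) ℂ) μ - A) *ᵥ v = μ • v - A *ᵥ v := by
    intro v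
    rw [Matrix.sub_mulVec, Algebra.algebraMap_eq_smul_one, Matrix.smul_mulVec,
      Matrix.one_mulVec]
  constructor
  · rintro ⟨v, hv, h⟩; exact ⟨v, hv, (sub_eq_zero.mp (key v ▸ h)).symm⟩
  · rintro ⟨v, hv, h⟩; exact ⟨v, hv, by rw [key, h, sub_self]⟩

lemma absSet_eq (A : Matrix (Fin N) (Fin N) ℝ) :
    {r : ℝ | ∃ μ ∈ spectrum ℂ (A.map (Complex.ofReal : ℝ → ℂ)), r = ‖μ‖}
      = (fun μ : ℂ => ‖μ‖) '' (spectrum ℂ (A.map (Complex.ofReal : ℝ → ℂ))) := by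
  ext r; simp [eq_comm, Set.mem_image]

section NeZeroSec
variable [NeZero N]

lemma specRad_isGreatest (A : Matrix (Fin N) (Fin N) ℝ) :
    IsGreatest ((fun μ : ℂ => ‖μ‖) '' (spectrum ℂ (A.map (Complex.ofReal : ℝ → ℂ))))
      (specRad N A) := by
  have hc : IsCompact ((fun μ : ℂ => ‖μ‖) '' (spectrum ℂ (A.map (Complex.ofReal : ℝ → ℂ)))) :=
    (spectrum.isCompact _).image (continuous_norm)
  have hne : ((fun μ : ℂ => ‖μ‖) '' (spectrum ℂ (A.map (Complex.ofReal : ℝ → ℂ)))).Nonempty :=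
    (spectrum.nonempty _).image _
  have := hc.isGreatest_sSup hne
  rwa [specRad, absSet_eq]

lemma specRad_mem (A : Matrix (Fin N) (Fin N) ℝ) :
    ∃ μ ∈ spectrum ℂ (A.map (Complex.ofReal : ℝ → ℂ)), ‖μ‖ = specRad N A := by
  obtain ⟨μ, hμ, h⟩ := (specRad_isGreatest A).1
  exact ⟨μ, hμ, h⟩

lemma abs_le_specRad {A : Matrix (Fin N) (Fin N) ℝ} {μ : ℂ}
    (h : μ ∈ spectrum ℂ (A.map (Complex.ofReal : ℝ → ℂ))) :
    ‖μ‖ ≤ specRad N A :=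
  (specRad_isGreatest A).2 ⟨μ, h, rfl⟩

lemma specRad_nonneg (A : Matrix (Fin N) (Fin N) ℝ) : 0 ≤ specRad N A := by
  obtain ⟨μ, _, h⟩ := specRad_mem A
  rw [← h]; exact norm_nonneg μ

lemma spectralRadius_eq (A : Matrix (Fin N) (Fin N) ℝ) :
    spectralRadius ℂ (A.map (Complex.ofReal : ℝ → ℂ)) = ENNReal.ofReal (specRad N A) := by
  obtain ⟨μ0, hμ0, habs⟩ := specRad_mem A
  rw [spectralRadius]
  have hcoe : (‖μ0‖₊ : ENNReal) = ENNReal.ofReal ‖μ0‖ := by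
    rw [ofReal_norm, enorm_eq_nnnorm]
  apply le_antisymm
  · apply iSup₂_le
    intro μ hμ
    have h1 : ‖μ‖ ≤ ‖μ0‖ := by rw [habs]; exact abs_le_specRad hμ
    rw [← habs, ← hcoe]
    exact_mod_cast h1
  · rw [← habs, ← hcoe]
    exact le_iSup₂ (f := fun μ _ => (‖μ‖₊ : ENNReal)) μ0 hμ0

/-- Gelfand's formula, real form. -/
lemma gelfandR (A : Matrix (Fin N) (Fin N) ℝ) :
    Tendsto (fun n : ℕ => ‖(A ^ n).map (Complex.ofReal : ℝ → ℂ)‖ ^ (1 / (n : ℝ)))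
      atTop (𝓝 (specRad N A)) := by
  have hm : ∀ n : ℕ, (A ^ n).map (Complex.ofReal : ℝ → ℂ)
      = (A.map (Complex.ofReal : ℝ → ℂ)) ^ n := by
    intro n
    exact map_pow (Complex.ofRealHom.mapMatrix : Matrix (Fin N) (Fin N) ℝ →+* _) A n
  have h := spectrum.pow_norm_pow_one_div_tendsto_nhds_spectralRadius
    (A.map (Complex.ofReal : ℝ → ℂ))
  rw [spectralRadius_eq] at h
  have h2 : Tendsto (fun n : ℕ =>
      (ENNReal.ofReal (‖(A.map (Complex.ofReal : ℝ → ℂ)) ^ n‖ ^ (1 / (n:ℝ)))).toReal)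
      atTop (𝓝 ((ENNReal.ofReal (specRad N A)).toReal)) :=
    (ENNReal.tendsto_toReal ENNReal.ofReal_ne_top).comp h
  rw [ENNReal.toReal_ofReal (specRad_nonneg A)] at h2
  convert h2 using 2 with n
  rw [hm n]
  rw [ENNReal.toReal_ofReal (Real.rpow_nonneg (norm_nonneg _) _)]

end NeZeroSec

lemma rpow_one_div_tendsto_one {K : ℝ} (hK : 0 < K) :
    Tendsto (fun n : ℕ => K ^ (1 / (n:ℝ))) atTop (𝓝 1) := by
  have h0 : Tendsto (fun n : ℕ => 1 / (n:ℝ)) atTop (𝓝 0) := tendsto_one_div_atTop_nhds_zero_nat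
  have hc : ContinuousAt (fun y : ℝ => K ^ y) 0 :=
    (Real.continuousAt_const_rpow (ne_of_gt hK))
  simpa [Function.comp_def] using hc.tendsto.comp h0

lemma mulVec_mono {A : Matrix (Fin N) (Fin N) ℝ} (hA : EntryNN A) {u w : Fin N → ℝ}
    (h : ∀ j, u j ≤ w j) : ∀ j, (A *ᵥ u) j ≤ (A *ᵥ w) j := by
  intro j
  simp only [Matrix.mulVec, dotProduct]
  exact Finset.sum_le_sum fun k _ => mul_le_mul_of_nonneg_left (h k) (hA j k)

section NeZeroSec2
variable [NeZero N]

/-- monotonicity of the spectral radius -/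
lemma specRad_mono {A A' : Matrix (Fin N) (Fin N) ℝ}
    (hA : EntryNN A) (hAA : ∀ i j, A i j ≤ A' i j) :
    specRad N A ≤ specRad N A' := by
  refine le_of_tendsto_of_tendsto (gelfandR A) (gelfandR A') ?_
  filter_upwards [eventually_ge_atTop 1] with n hn
  have h1 : ‖(A ^ n).map (Complex.ofReal : ℝ → ℂ)‖ ≤ ‖(A' ^ n).map (Complex.ofReal : ℝ → ℂ)‖ :=
    nnnorm_mapC_mono' (hA.pow' n (by omega)) (pow_le_pow_entry hA hAA n (by omega))
  exact Real.rpow_le_rpow (norm_nonneg _) h1 (by positivity)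

/-- subinvariance: if A v ≥ r v with v > 0 then r ≤ specRad A -/
lemma le_specRad_of_subinvariant {A : Matrix (Fin N) (Fin N) ℝ} (hA : EntryNN A)
    {v : Fin N → ℝ} (hv : ∀ j, 0 < v j) {r : ℝ} (hr : 0 ≤ r)
    (hsub : ∀ j, r * v j ≤ (A *ᵥ v) j) : r ≤ specRad N A := by
  have key : ∀ n : ℕ, ∀ j, r ^ n * v j ≤ ((A ^ n) *ᵥ v) j := by
    intro n
    induction n with
    | zero => intro j; simp [Matrix.one_mulVec]
    | succ m ih =>
      intro j
      have h1 : ∀ j, (A *ᵥ fun k => r ^ m * v k) j ≤ (A *ᵥ ((A ^ m) *ᵥ v)) j :=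
        mulVec_mono hA ih
      have h2 : (A *ᵥ fun k => r ^ m * v k) j = r ^ m * (A *ᵥ v) j := by
        simp only [Matrix.mulVec, dotProduct]
        rw [Finset.mul_sum]; congr 1; funext k; ring
      calc r ^ (m+1) * v j = r ^ m * (r * v j) := by ring
        _ ≤ r ^ m * (A *ᵥ v) j := by
            exact mul_le_mul_of_nonneg_left (hsub j) (pow_nonneg hr m)
        _ = (A *ᵥ fun k => r ^ m * v k) j := h2.symm
        _ ≤ (A *ᵥ ((A ^ m) *ᵥ v)) j := h1 j
        _ = ((A ^ (m+1)) *ᵥ v) j := by rw [pow_succ', Matrix.mulVec_mulVec]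
  obtain ⟨j0⟩ : Nonempty (Fin N) := ⟨⟨0, Nat.pos_of_ne_zero (NeZero.ne N)⟩⟩
  set C : ℝ := ∑ k, v k with hC
  have hCpos : 0 < C := Finset.sum_pos (fun k _ => hv k) ⟨j0, Finset.mem_univ j0⟩
  have hbound : ∀ n : ℕ, r ^ n * (v j0 / C) ≤ ‖(A ^ n).map (Complex.ofReal : ℝ → ℂ)‖ := by
    intro n
    rcases Nat.eq_zero_or_pos n with h0 | hn
    · subst h0
      have : v j0 / C ≤ 1 := by
        rw [div_le_one hCpos]
        exact Finset.single_le_sum (fun k _ => (hv k).le) (Finset.mem_univ j0)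
      calc r ^ 0 * (v j0 / C) ≤ 1 := by simpa using this
        _ ≤ ‖((A:Matrix (Fin N) (Fin N) ℝ) ^ 0).map (Complex.ofReal : ℝ → ℂ)‖ := by
            have h := row_sum_le_nnnorm ((A:Matrix (Fin N) (Fin N) ℝ) ^ 0) j0
            have hrow : (∑ k, ‖((A:Matrix (Fin N) (Fin N) ℝ) ^ 0) j0 k‖₊) = 1 := by
              rw [show (∑ k, ‖((A:Matrix (Fin N) (Fin N) ℝ) ^ 0) j0 k‖₊)
                  = ∑ k, (if j0 = k then 1 else 0) from Finset.sum_congr rfl fun k _ => by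
                    by_cases h : j0 = k <;> simp [Matrix.one_apply, h]]
              simp
            rw [hrow] at h
            exact_mod_cast h
    · have hent : EntryNN (A ^ n) := hA.pow' n hn.ne'
      have h1 : r ^ n * v j0 ≤ ∑ k, (A ^ n) j0 k * v k := by
        have := key n j0
        simpa [Matrix.mulVec, dotProduct] using this
      have h2 : ∑ k, (A ^ n) j0 k * v k ≤ (∑ k, (A ^ n) j0 k) * C := by
        rw [Finset.sum_mul]
        refine Finset.sum_le_sum fun k _ => mul_le_mul_of_nonneg_left ?_ (hent j0 k)
        exact Finset.single_le_sum (fun i _ => (hv i).le) (Finset.mem_univ k)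
      have h3 : (∑ k, (A ^ n) j0 k) ≤ ‖(A ^ n).map (Complex.ofReal : ℝ → ℂ)‖ := by
        have := row_sum_le_nnnorm (A ^ n) j0
        have hc : ((∑ k, ‖(A ^ n) j0 k‖₊ : NNReal) : ℝ) ≤ ‖(A ^ n).map (Complex.ofReal : ℝ → ℂ)‖ := by
          exact_mod_cast this
        refine le_trans ?_ hc
        push_cast
        apply le_of_eq
        refine Finset.sum_congr rfl fun k _ => ?_
        rw [Real.norm_of_nonneg (hent j0 k)]
      calc r ^ n * (v j0 / C) = (r ^ n * v j0) / C := by ring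
        _ ≤ (∑ k, (A ^ n) j0 k * v k) / C := by
            exact (div_le_div_iff_of_pos_right hCpos).mpr h1
        _ ≤ ((∑ k, (A ^ n) j0 k) * C) / C := by
            exact (div_le_div_iff_of_pos_right hCpos).mpr h2
        _ = ∑ k, (A ^ n) j0 k := by field_simp
        _ ≤ _ := h3
  set K : ℝ := v j0 / C with hK
  have hKpos : 0 < K := div_pos (hv j0) hCpos
  have hfin : ∀ n : ℕ, 1 ≤ n → r * K ^ (1/(n:ℝ))
      ≤ ‖(A ^ n).map (Complex.ofReal : ℝ → ℂ)‖ ^ (1/(n:ℝ)) := by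
    intro n hn
    have hb := hbound n
    have hnr : (0:ℝ) < n := by exact_mod_cast hn
    have := Real.rpow_le_rpow (by positivity) hb (by positivity : (0:ℝ) ≤ 1/(n:ℝ))
    calc r * K ^ (1/(n:ℝ)) = (r ^ n * K) ^ (1/(n:ℝ)) := by
          rw [Real.mul_rpow (by positivity) hKpos.le, ← Real.rpow_natCast r n,
            ← Real.rpow_mul hr]
          rw [mul_one_div, div_self hnr.ne', Real.rpow_one]
      _ ≤ _ := this
  have hlim : Tendsto (fun n : ℕ => r * K ^ (1/(n:ℝ))) atTop (𝓝 r) := by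
    have := (rpow_one_div_tendsto_one hKpos).const_mul r
    simpa using this
  refine le_of_tendsto_of_tendsto hlim (gelfandR A) ?_
  filter_upwards [eventually_ge_atTop 1] with n hn using hfin n hn

end NeZeroSec2

/-- entrywise formula for (1+A)^M -/
lemma onePlusPow_entry {A : Matrix (Fin N) (Fin N) ℝ} (M : ℕ) (i j : Fin N) :
    ((1 + A) ^ M) i j = ∑ k ∈ Finset.range (M + 1), (M.choose k : ℝ) * (A ^ k) i j := by
  rw [add_comm (1 : Matrix (Fin N) (Fin N) ℝ) A, Commute.add_pow (Commute.one_right A)]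
  rw [Matrix.sum_apply]
  refine Finset.sum_congr rfl fun k hk => ?_
  rw [one_pow, mul_one, ← Matrix.diagonal_natCast (α := ℝ) (n := Fin N) (M.choose k),
    Matrix.mul_diagonal]
  ring

lemma onePlusPow_nonneg {A : Matrix (Fin N) (Fin N) ℝ} (hA : EntryNN A) (M : ℕ) :
    EntryNN ((1 + A) ^ M) := by
  intro i j
  rw [onePlusPow_entry]
  refine Finset.sum_nonneg fun k hk => mul_nonneg (Nat.cast_nonneg _) ?_
  rcases Nat.eq_zero_or_pos k with h | h
  · subst h; simp [Matrix.one_apply]; positivity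
  · exact hA.pow' k h.ne' i j

lemma pow_le_onePlusPow {A : Matrix (Fin N) (Fin N) ℝ} (hA : EntryNN A) {m M : ℕ}
    (hmM : m ≤ M) (i j : Fin N) : (A ^ m) i j ≤ ((1 + A) ^ M) i j := by
  rw [onePlusPow_entry]
  have hterm : ∀ k ∈ Finset.range (M + 1), 0 ≤ (M.choose k : ℝ) * (A ^ k) i j := by
    intro k hk
    refine mul_nonneg (Nat.cast_nonneg _) ?_
    rcases Nat.eq_zero_or_pos k with h | h
    · subst h; simp [Matrix.one_apply]; positivity
    · exact hA.pow' k h.ne' i j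
  have hmem : m ∈ Finset.range (M + 1) := Finset.mem_range.mpr (by omega)
  calc (A ^ m) i j ≤ (M.choose m : ℝ) * (A ^ m) i j := by
        have h1 : (1 : ℝ) ≤ (M.choose m : ℝ) := by
          exact_mod_cast Nat.succ_le_of_lt (Nat.choose_pos hmM)
        nlinarith [hterm m hmem, h1]
    _ ≤ _ := Finset.single_le_sum hterm hmem

lemma one_le_onePlusPow_diag {A : Matrix (Fin N) (Fin N) ℝ} (hA : EntryNN A) (M : ℕ) (j : Fin N) :
    1 ≤ ((1 + A) ^ M) j j := by
  have := pow_le_onePlusPow hA (Nat.zero_le M) j j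
  simpa [Matrix.one_apply] using this

/-- positivity improvement -/
lemma exists_pos_onePlusPow_mulVec {A : Matrix (Fin N) (Fin N) ℝ} (hA : EntryNN A)
    (hirr : MatIrreducible N A) {y : Fin N → ℝ} (hy : ∀ j, 0 ≤ y j) {j0 : Fin N} (hj0 : 0 < y j0) :
    ∃ M0 : ℕ, ∀ M, M0 ≤ M → ∀ j, 0 < (((1 + A) ^ M) *ᵥ y) j := by
  choose m hm hmpos using fun j => hirr j j0
  refine ⟨Finset.univ.sup m, fun M hM j => ?_⟩
  have hMj : m j ≤ M := le_trans (Finset.le_sup (Finset.mem_univ j)) hM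
  have hterm : ∀ k, 0 ≤ ((1 + A) ^ M) j k * y k := fun k =>
    mul_nonneg (onePlusPow_nonneg hA M j k) (hy k)
  have hsingle : (A ^ (m j)) j j0 * y j0 ≤ (((1 + A) ^ M) *ᵥ y) j := by
    calc (A ^ (m j)) j j0 * y j0 ≤ ((1 + A) ^ M) j j0 * y j0 :=
          mul_le_mul_of_nonneg_right (pow_le_onePlusPow hA hMj j j0) hj0.le
      _ ≤ ∑ k, ((1 + A) ^ M) j k * y k :=
          Finset.single_le_sum (fun k _ => hterm k) (Finset.mem_univ j0)
      _ = (((1 + A) ^ M) *ᵥ y) j := by simp [Matrix.mulVec, dotProduct]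
  exact lt_of_lt_of_le (mul_pos (hmpos j) hj0) hsingle

section NeZeroSec3
variable [NeZero N]

/-- strict subinvariance -/
lemma lt_specRad_of_subinvariant_ne {A : Matrix (Fin N) (Fin N) ℝ} (hA : EntryNN A)
    (hirr : MatIrreducible N A) {w : Fin N → ℝ} (hw : ∀ j, 0 < w j) {ρ : ℝ} (hρ : 0 ≤ ρ)
    (hsub : ∀ j, ρ * w j ≤ (A *ᵥ w) j) (hne : ∃ j, ρ * w j < (A *ᵥ w) j) :
    ρ < specRad N A := by
  set z : Fin N → ℝ := fun j => (A *ᵥ w) j - ρ * w j with hz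
  have hznn : ∀ j, 0 ≤ z j := fun j => sub_nonneg.mpr (hsub j)
  obtain ⟨j1, hj1⟩ := hne
  have hzpos : 0 < z j1 := sub_pos.mpr hj1
  obtain ⟨M0, hM0⟩ := exists_pos_onePlusPow_mulVec hA hirr hznn hzpos
  set P : Matrix (Fin N) (Fin N) ℝ := (1 + A) ^ M0 with hP
  set W : Fin N → ℝ := P *ᵥ w with hW
  set u : Fin N → ℝ := P *ᵥ z with hu
  have hupos : ∀ j, 0 < u j := hM0 M0 le_rfl
  have hWpos : ∀ j, 0 < W j := by
    intro j
    have hterm : ∀ k, 0 ≤ P j k * w k := fun k =>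
      mul_nonneg (onePlusPow_nonneg hA M0 j k) (hw k).le
    have : P j j * w j ≤ W j := by
      calc P j j * w j ≤ ∑ k, P j k * w k :=
            Finset.single_le_sum (fun k _ => hterm k) (Finset.mem_univ j)
        _ = W j := by simp [hW, Matrix.mulVec, dotProduct]
    have h1 : (1:ℝ) * w j ≤ P j j * w j :=
      mul_le_mul_of_nonneg_right (one_le_onePlusPow_diag hA M0 j) (hw j).le
    nlinarith [hw j]
  have hcomm : A * P = P * A := by
    have : Commute A ((1 + A) ^ M0) := (Commute.add_right (Commute.one_right A) rfl).pow_right M0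
    exact this
  have hAW : A *ᵥ W = fun j => ρ * W j + u j := by
    have h1 : A *ᵥ W = (A * P) *ᵥ w := by rw [hW, Matrix.mulVec_mulVec]
    have h2 : (A * P) *ᵥ w = P *ᵥ (A *ᵥ w) := by
      rw [hcomm, ← Matrix.mulVec_mulVec]
    have h3 : (A *ᵥ w) = fun j => z j + ρ * w j := by funext j; simp [hz]
    rw [h1, h2, h3]
    funext j
    have : (P *ᵥ fun j => z j + ρ * w j) = P *ᵥ z + P *ᵥ (fun j => ρ * w j) := by
      rw [← Matrix.mulVec_add]; rfl
    rw [this]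
    have h4 : P *ᵥ (fun j => ρ * w j) = fun j => ρ * (P *ᵥ w) j := by
      funext i
      simp only [Matrix.mulVec, dotProduct]
      rw [Finset.mul_sum]
      exact Finset.sum_congr rfl fun k _ => by ring
    rw [h4]
    simp [hu, hW]
    ring
  set ε : ℝ := Finset.univ.inf' ⟨⟨0, Nat.pos_of_ne_zero (NeZero.ne N)⟩, Finset.mem_univ _⟩
    (fun j => u j / W j) with hε
  obtain ⟨jm, -, hjm⟩ := Finset.exists_mem_eq_inf' (α := ℝ)
    ⟨⟨0, Nat.pos_of_ne_zero (NeZero.ne N)⟩, Finset.mem_univ _⟩ (fun j => u j / W j)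
  have hεpos : 0 < ε := by rw [hε, hjm]; exact div_pos (hupos jm) (hWpos jm)
  have hεle : ∀ j, ε * W j ≤ u j := by
    intro j
    have : ε ≤ u j / W j := Finset.inf'_le _ (Finset.mem_univ j)
    calc ε * W j ≤ (u j / W j) * W j := mul_le_mul_of_nonneg_right this (hWpos j).le
      _ = u j := div_mul_cancel₀ (u j) (hWpos j).ne'
  have hfinal : ρ + ε ≤ specRad N A := by
    refine le_specRad_of_subinvariant hA hWpos (by linarith) fun j => ?_
    have := congrFun hAW j
    rw [this]
    have := hεle j
    nlinarith [hWpos j]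
  linarith

/-- Perron eigenvector -/
lemma perron {A : Matrix (Fin N) (Fin N) ℝ} (hA : EntryNN A) (hirr : MatIrreducible N A) :
    ∃ w : Fin N → ℝ, (∀ j, 0 < w j) ∧ A *ᵥ w = fun j => specRad N A * w j := by
  set ρ := specRad N A with hρdef
  obtain ⟨μ0, hμ0, habs⟩ := specRad_mem A
  obtain ⟨x, hx0, hxeq⟩ := (mem_spec_iff _ μ0).mp hμ0
  set y : Fin N → ℝ := fun j => ‖x j‖ with hy
  have hynn : ∀ j, 0 ≤ y j := fun j => norm_nonneg _
  obtain ⟨j0, hj0⟩ : ∃ j, x j ≠ 0 := Function.ne_iff.mp hx0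
  have hyj0 : 0 < y j0 := by simpa [hy] using norm_pos_iff.mpr hj0
  have hsub : ∀ j, ρ * y j ≤ (A *ᵥ y) j := by
    intro j
    have h1 : ((A.map (Complex.ofReal : ℝ → ℂ)) *ᵥ x) j = μ0 * x j := by
      rw [hxeq]; simp
    have h2 : ((A.map (Complex.ofReal : ℝ → ℂ)) *ᵥ x) j = ∑ k, (A j k : ℂ) * x k := by
      simp [Matrix.mulVec, dotProduct, Matrix.map_apply]
    have h3 : ‖μ0 * x j‖ = ρ * y j := by
      rw [norm_mul, habs]
    have h4 : ‖∑ k, (A j k : ℂ) * x k‖ ≤ ∑ k, A j k * y k := by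
      refine le_trans (norm_sum_le _ _) ?_
      refine le_of_eq (Finset.sum_congr rfl fun k _ => ?_)
      rw [norm_mul, Complex.norm_real, Real.norm_of_nonneg (hA j k)]
    have h5 : (A *ᵥ y) j = ∑ k, A j k * y k := by
      simp [Matrix.mulVec, dotProduct]
    rw [← h3, ← h2, h1, h2, h5] at *
    exact le_trans (le_of_eq (by rw [← h1, h2])) (h4.trans (le_of_eq rfl)) |>.trans (le_refl _)
  obtain ⟨M0, hM0⟩ := exists_pos_onePlusPow_mulVec hA hirr hynn hyj0
  set P : Matrix (Fin N) (Fin N) ℝ := (1 + A) ^ M0 with hP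
  set w : Fin N → ℝ := P *ᵥ y with hw
  have hwpos : ∀ j, 0 < w j := hM0 M0 le_rfl
  have hcomm : A * P = P * A :=
    (Commute.add_right (Commute.one_right A) rfl).pow_right M0
  have hAw : A *ᵥ w = P *ᵥ (A *ᵥ y) := by
    rw [hw, Matrix.mulVec_mulVec, hcomm, ← Matrix.mulVec_mulVec]
  have hsubw : ∀ j, ρ * w j ≤ (A *ᵥ w) j := by
    intro j
    have h1 : ∀ k, (fun i => ρ * y i) k ≤ (A *ᵥ y) k := hsub
    have h2 := mulVec_mono (onePlusPow_nonneg hA M0) h1 j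
    have h3 : (P *ᵥ fun i => ρ * y i) j = ρ * w j := by
      simp only [Matrix.mulVec, dotProduct, hw]
      rw [Finset.mul_sum]
      exact Finset.sum_congr rfl fun k _ => by ring
    rw [← hAw] at h2
    rw [← h3]; exact h2
  refine ⟨w, hwpos, ?_⟩
  by_contra hne
  have : ∃ j, ρ * w j < (A *ᵥ w) j := by
    by_contra hall
    push_neg at hall
    exact hne (funext fun j => le_antisymm (hall j) (hsubw j))
  exact absurd (lt_specRad_of_subinvariant_ne hA hirr hwpos (specRad_nonneg A) hsubw this)
    (lt_irrefl ρ)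

lemma specRad_mem_spectrum {A : Matrix (Fin N) (Fin N) ℝ} (hA : EntryNN A)
    (hirr : MatIrreducible N A) :
    ((specRad N A : ℝ) : ℂ) ∈ spectrum ℂ (A.map (Complex.ofReal : ℝ → ℂ)) := by
  obtain ⟨w, hwpos, hweq⟩ := perron hA hirr
  refine (mem_spec_iff _ _).mpr ⟨fun j => (w j : ℂ), ?_, ?_⟩
  · intro h
    have := congrFun h ⟨0, Nat.pos_of_ne_zero (NeZero.ne N)⟩
    simp only [Pi.zero_apply, Complex.ofReal_eq_zero] at this
    exact absurd this (hwpos _).ne'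
  · funext j
    have h1 := congrFun hweq j
    simp only [Matrix.mulVec, dotProduct, Matrix.map_apply, Pi.smul_apply, smul_eq_mul]
    rw [show ∑ k, (A j k : ℂ) * (w k : ℂ) = ((∑ k, A j k * w k : ℝ) : ℂ) by push_cast; rfl]
    rw [show (∑ k, A j k * w k : ℝ) = specRad N A * w j from h1]
    push_cast
    ring

/-- strict monotonicity of the spectral radius -/
lemma specRad_lt_specRad {A A' : Matrix (Fin N) (Fin N) ℝ}
    (hA : EntryNN A) (hirrA : MatIrreducible N A) (hA' : EntryNN A')
    (hirrA' : MatIrreducible N A')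
    (hle : ∀ i j, A i j ≤ A' i j) {i0 j0 : Fin N} (hstrict : A i0 j0 < A' i0 j0) :
    specRad N A < specRad N A' := by
  obtain ⟨w, hwpos, hweq⟩ := perron hA hirrA
  have hsub : ∀ j, specRad N A * w j ≤ (A' *ᵥ w) j := by
    intro j
    rw [show specRad N A * w j = (A *ᵥ w) j from (congrFun hweq j).symm]
    simp only [Matrix.mulVec, dotProduct]
    exact Finset.sum_le_sum fun k _ => mul_le_mul_of_nonneg_right (hle j k) (hwpos k).le
  have hne : ∃ j, specRad N A * w j < (A' *ᵥ w) j := by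
    refine ⟨i0, ?_⟩
    rw [show specRad N A * w i0 = (A *ᵥ w) i0 from (congrFun hweq i0).symm]
    simp only [Matrix.mulVec, dotProduct]
    refine Finset.sum_lt_sum (fun k _ => mul_le_mul_of_nonneg_right (hle i0 k) (hwpos k).le)
      ⟨j0, Finset.mem_univ j0, ?_⟩
    exact mul_lt_mul_of_pos_right hstrict (hwpos j0)
  exact lt_specRad_of_subinvariant_ne hA' hirrA' hwpos (specRad_nonneg A) hsub hne

end NeZeroSec3

lemma mapC_shift (A : Matrix (Fin N) (Fin N) ℝ) (s : ℝ) :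
    (A + s • (1 : Matrix (Fin N) (Fin N) ℝ)).map (Complex.ofReal : ℝ → ℂ)
      = A.map (Complex.ofReal : ℝ → ℂ) + (s : ℂ) • 1 := by
  ext i j
  by_cases h : i = j <;>
    simp [Matrix.map_apply, Matrix.add_apply, Matrix.smul_apply, Matrix.one_apply, h]

lemma shift_mem_iff (A : Matrix (Fin N) (Fin N) ℝ) (s : ℝ) (μ : ℂ) :
    μ ∈ spectrum ℂ ((A + s • (1 : Matrix (Fin N) (Fin N) ℝ)).map (Complex.ofReal : ℝ → ℂ))
      ↔ μ - s ∈ spectrum ℂ (A.map (Complex.ofReal : ℝ → ℂ)) := by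
  rw [mapC_shift, mem_spec_iff, mem_spec_iff]
  have key : ∀ v : Fin N → ℂ,
      ((A.map (Complex.ofReal : ℝ → ℂ) + (s:ℂ) • 1) *ᵥ v = μ • v)
        ↔ (A.map (Complex.ofReal : ℝ → ℂ) *ᵥ v = (μ - s) • v) := by
    intro v
    rw [Matrix.add_mulVec, Matrix.smul_mulVec, Matrix.one_mulVec]
    constructor
    · intro h
      have := congrArg (fun u => u - (s:ℂ) • v) h
      simpa [sub_smul, add_sub_cancel_right] using this
    · intro h
      rw [h, sub_smul]
      abel
  exact ⟨fun ⟨v, hv, h⟩ => ⟨v, hv, (key v).mp h⟩, fun ⟨v, hv, h⟩ => ⟨v, hv, (key v).mpr h⟩⟩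

section NeZeroSec4
variable [NeZero N]

/-- spectral abscissa via shifted spectral radius -/
lemma specAbsc_eq_sub {A : Matrix (Fin N) (Fin N) ℝ} {s : ℝ}
    (h1 : EntryNN (A + s • 1)) (h2 : MatIrreducible N (A + s • 1)) :
    specAbsc N A = specRad N (A + s • 1) - s := by
  set ρ' := specRad N (A + s • 1) with hρ'
  rw [specAbsc]
  apply IsGreatest.csSup_eq
  constructor
  · refine ⟨((ρ' - s : ℝ) : ℂ), ?_, by simp⟩
    have := specRad_mem_spectrum h1 h2
    have h3 := (shift_mem_iff A s ((ρ' : ℝ) : ℂ)).mp this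
    convert h3 using 2
    push_cast; ring
  · rintro r ⟨μ, hμ, rfl⟩
    have h4 : μ + s ∈ spectrum ℂ
        ((A + s • (1 : Matrix (Fin N) (Fin N) ℝ)).map (Complex.ofReal : ℝ → ℂ)) := by
      rw [shift_mem_iff]; simpa using hμ
    have h5 : ‖μ + s‖ ≤ ρ' := abs_le_specRad h4
    have h6 : (μ + s).re ≤ ‖μ + s‖ := Complex.re_le_norm _
    have h7 : (μ + s).re = μ.re + s := by simp
    linarith

end NeZeroSec4

lemma Bstar_apply (B Bh : Matrix (Fin N) (Fin N) ℝ) (p : Fin N → ℝ) (i j : Fin N) :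
    Bstar N B Bh p i j = (1 - p i) * Bh i j + p i * B i j := by
  rw [Bstar, show (1 : Matrix (Fin N) (Fin N) ℝ) - Matrix.diagonal p
      = Matrix.diagonal (fun i => 1 - p i) by
    rw [← Matrix.diagonal_one, Matrix.diagonal_sub],
    Matrix.add_apply, Matrix.diagonal_mul, Matrix.diagonal_mul]

lemma Bstar_one (B Bh : Matrix (Fin N) (Fin N) ℝ) :
    Bstar N B Bh (fun _ => (1:ℝ)) = B := by
  ext i j; rw [Bstar_apply]; ring

lemma Bstar_zero (B Bh : Matrix (Fin N) (Fin N) ℝ) :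
    Bstar N B Bh (0 : Fin N → ℝ) = Bh := by
  ext i j; rw [Bstar_apply]; simp

lemma shifted_apply (Z : Matrix (Fin N) (Fin N) ℝ) (δ : Fin N → ℝ) (s : ℝ) (i j : Fin N) :
    (Z - Matrix.diagonal δ + s • (1 : Matrix (Fin N) (Fin N) ℝ)) i j
      = Z i j + (if i = j then s - δ i else 0) := by
  by_cases h : i = j
  · subst h
    simp [Matrix.sub_apply, Matrix.add_apply, Matrix.smul_apply, Matrix.one_apply,
      Matrix.diagonal_apply_eq]
    ring
  · simp [Matrix.sub_apply, Matrix.add_apply, Matrix.smul_apply, Matrix.one_apply,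
      Matrix.diagonal_apply_ne _ h, h]

variable [NeZero N]

/-- key strict comparison of spectral abscissas -/
lemma absc_lt_absc {Y X X' : Matrix (Fin N) (Fin N) ℝ} {δ : Fin N → ℝ} {s : ℝ}
    (hY : EntryNN Y) (hYirr : MatIrreducible N Y)
    (hX : EntryNN X) (hX' : EntryNN X')
    (hYX : ∀ i j, Y i j ≤ X i j) (hYX' : ∀ i j, Y i j ≤ X' i j)
    (hXX' : ∀ i j, X i j ≤ X' i j) {i0 j0 : Fin N} (hstrict : X i0 j0 < X' i0 j0)
    (hδs : ∀ i, δ i + 1 ≤ s) :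
    specAbsc N (X - Matrix.diagonal δ) < specAbsc N (X' - Matrix.diagonal δ) := by
  have hshnn : ∀ Z : Matrix (Fin N) (Fin N) ℝ, EntryNN Z →
      EntryNN (Z - Matrix.diagonal δ + s • 1) := by
    intro Z hZ i j
    rw [shifted_apply]
    by_cases h : i = j
    · simp only [h, if_pos rfl] at *
      have := hδs j
      have := hZ j j
      simp [h]
      linarith [hδs j, hZ j j]
    · simp [h]; exact hZ i j
  have hYsh : ∀ Z : Matrix (Fin N) (Fin N) ℝ, (∀ i j, Y i j ≤ Z i j) →
      ∀ i j, Y i j ≤ (Z - Matrix.diagonal δ + s • 1) i j := by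
    intro Z hZ i j
    rw [shifted_apply]
    by_cases h : i = j
    · subst h; have := hδs i; have := hZ i i; simp; linarith
    · simp [h]; exact hZ i j
  have hirrX : MatIrreducible N (X - Matrix.diagonal δ + s • 1) :=
    matIrreducible_mono hY (hYsh X hYX) hYirr
  have hirrX' : MatIrreducible N (X' - Matrix.diagonal δ + s • 1) :=
    matIrreducible_mono hY (hYsh X' hYX') hYirr
  have hle : ∀ i j, (X - Matrix.diagonal δ + s • 1) i j ≤ (X' - Matrix.diagonal δ + s • 1) i j := by
    intro i j
    rw [shifted_apply, shifted_apply]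
    have := hXX' i j
    by_cases h : i = j
    · subst h; simp; linarith
    · simp [h]; linarith
  have hst : (X - Matrix.diagonal δ + s • 1) i0 j0 < (X' - Matrix.diagonal δ + s • 1) i0 j0 := by
    rw [shifted_apply, shifted_apply]
    by_cases h : i0 = j0
    · subst h; simp; linarith
    · simp [h]; linarith
  rw [specAbsc_eq_sub (hshnn X hX) hirrX, specAbsc_eq_sub (hshnn X' hX') hirrX']
  have := specRad_lt_specRad (hshnn X hX) hirrX (hshnn X' hX') hirrX' hle hst
  linarith


end PFaux

/-- with no stubborn agents, Λ is uniquely extremized at the corners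
0 and 1 of the cube, and R_max, R_min equal the corresponding corner reproduction
numbers R₀ = ρ(B D⁻¹), R₁ = ρ(B̂ D⁻¹). -/
theorem stmt13 {N : ℕ} (hN : 2 ≤ N) (B Bh : Matrix (Fin N) (Fin N) ℝ) (δ : Fin N → ℝ)
    (hB : ∀ j k, 0 ≤ B j k) (hBirr : MatIrreducible N B)
    (hBh : ∀ j k, 0 ≤ Bh j k) (hz : ∀ j k, B j k = 0 → Bh j k = 0)
    (hδ : ∀ j, 0 < δ j) :
    (MatIrreducible N Bh → (∀ j k, Bh j k ≤ B j k) → (∀ j, ∃ k, Bh j k < B j k) →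
      (∀ p ∈ cube N, p ≠ (fun _ => (1:ℝ)) →
        specAbsc N (Bstar N B Bh p - Matrix.diagonal δ)
          < specAbsc N (Bstar N B Bh (fun _ => (1:ℝ)) - Matrix.diagonal δ)) ∧
      (∀ p ∈ cube N, p ≠ (0 : Fin N → ℝ) →
        specAbsc N (Bstar N B Bh (0 : Fin N → ℝ) - Matrix.diagonal δ)
          < specAbsc N (Bstar N B Bh p - Matrix.diagonal δ)) ∧
      Rmax N B Bh (Matrix.diagonal δ) = specRad N (B * (Matrix.diagonal δ)⁻¹) ∧
      Rmin N B Bh (Matrix.diagonal δ) = specRad N (Bh * (Matrix.diagonal δ)⁻¹))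
    ∧ ((∀ j k, B j k ≤ Bh j k) → (∀ j, ∃ k, B j k < Bh j k) →
      (∀ p ∈ cube N, p ≠ (0 : Fin N → ℝ) →
        specAbsc N (Bstar N B Bh p - Matrix.diagonal δ)
          < specAbsc N (Bstar N B Bh (0 : Fin N → ℝ) - Matrix.diagonal δ)) ∧
      (∀ p ∈ cube N, p ≠ (fun _ => (1:ℝ)) →
        specAbsc N (Bstar N B Bh (fun _ => (1:ℝ)) - Matrix.diagonal δ)
          < specAbsc N (Bstar N B Bh p - Matrix.diagonal δ)) ∧
      Rmax N B Bh (Matrix.diagonal δ) = specRad N (Bh * (Matrix.diagonal δ)⁻¹) ∧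
      Rmin N B Bh (Matrix.diagonal δ) = specRad N (B * (Matrix.diagonal δ)⁻¹)) := by
  haveI : NeZero N := ⟨by omega⟩
  set s : ℝ := 1 + ∑ j, δ j with hs
  have hsδ : ∀ j, δ j + 1 ≤ s := by
    intro j
    have h1 : δ j ≤ ∑ k, δ k :=
      Finset.single_le_sum (fun k _ => (hδ k).le) (Finset.mem_univ j)
    rw [hs]; linarith
  have hDinv : (Matrix.diagonal δ)⁻¹ = Matrix.diagonal (fun i => (δ i)⁻¹) := by
    apply Matrix.inv_eq_right_inv
    rw [Matrix.diagonal_mul_diagonal]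
    rw [show (fun i => δ i * (δ i)⁻¹) = fun _ : Fin N => (1:ℝ) from
      funext fun i => mul_inv_cancel₀ (hδ i).ne']
    exact Matrix.diagonal_one
  have hRle : ∀ X X' : Matrix (Fin N) (Fin N) ℝ, PFaux.EntryNN X → (∀ i j, X i j ≤ X' i j) →
      specRad N (X * (Matrix.diagonal δ)⁻¹) ≤ specRad N (X' * (Matrix.diagonal δ)⁻¹) := by
    intro X X' hX hXX'
    rw [hDinv]
    apply PFaux.specRad_mono
    · intro i j; rw [Matrix.mul_diagonal]; exact mul_nonneg (hX i j) (inv_nonneg.mpr (hδ j).le)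
    · intro i j; rw [Matrix.mul_diagonal, Matrix.mul_diagonal]
      exact mul_le_mul_of_nonneg_right (hXX' i j) (inv_nonneg.mpr (hδ j).le)
  have hcube1 : (fun _ : Fin N => (1:ℝ)) ∈ cube N := fun j => ⟨zero_le_one, le_refl 1⟩
  have hcube0 : (0 : Fin N → ℝ) ∈ cube N := fun j => by simp
  have hBstar_nn : ∀ p ∈ cube N, PFaux.EntryNN (Bstar N B Bh p) := by
    intro p hp i j; rw [PFaux.Bstar_apply]
    have h1 := (hp i).1; have h2 := (hp i).2
    have h3 := hBh i j; have h4 := hB i j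
    nlinarith
  constructor
  · intro hBhirr hle hstub
    have hBh_le : ∀ p ∈ cube N, ∀ i j, Bh i j ≤ Bstar N B Bh p i j := by
      intro p hp i j; rw [PFaux.Bstar_apply]
      have h1 := (hp i).1; have h2 := (hp i).2; have h3 := hle i j; nlinarith
    have hle_B : ∀ p ∈ cube N, ∀ i j, Bstar N B Bh p i j ≤ B i j := by
      intro p hp i j; rw [PFaux.Bstar_apply]
      have h1 := (hp i).1; have h2 := (hp i).2; have h3 := hle i j; nlinarith
    refine ⟨?_, ?_, ?_, ?_⟩
    · intro p hp hne
      obtain ⟨j, hj⟩ : ∃ j, p j ≠ 1 := by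
        by_contra hall; push_neg at hall; exact hne (funext hall)
      have hj1 : p j < 1 := lt_of_le_of_ne (hp j).2 hj
      obtain ⟨k, hk⟩ := hstub j
      refine PFaux.absc_lt_absc hBh hBhirr (hBstar_nn p hp) (hBstar_nn _ hcube1)
        (hBh_le p hp) (hBh_le _ hcube1) ?_ (i0 := j) (j0 := k) ?_ hsδ
      · intro i j'
        rw [show Bstar N B Bh (fun _ => (1:ℝ)) = B from PFaux.Bstar_one B Bh]
        exact hle_B p hp i j'
      · rw [show Bstar N B Bh (fun _ => (1:ℝ)) = B from PFaux.Bstar_one B Bh,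
          PFaux.Bstar_apply]
        nlinarith [(hp j).1]
    · intro p hp hne
      obtain ⟨j, hj⟩ : ∃ j, p j ≠ 0 := by
        by_contra hall; push_neg at hall; exact hne (funext hall)
      have hj0 : 0 < p j := lt_of_le_of_ne (hp j).1 (Ne.symm hj)
      obtain ⟨k, hk⟩ := hstub j
      refine PFaux.absc_lt_absc hBh hBhirr (hBstar_nn _ hcube0) (hBstar_nn p hp)
        (hBh_le _ hcube0) (hBh_le p hp) ?_ (i0 := j) (j0 := k) ?_ hsδ
      · intro i j'
        rw [show Bstar N B Bh (0 : Fin N → ℝ) = Bh from PFaux.Bstar_zero B Bh]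
        exact hBh_le p hp i j'
      · rw [show Bstar N B Bh (0 : Fin N → ℝ) = Bh from PFaux.Bstar_zero B Bh,
          PFaux.Bstar_apply]
        nlinarith [(hp j).2]
    · rw [Rmax]
      apply IsGreatest.csSup_eq
      constructor
      · exact ⟨fun _ => 1, hcube1, by rw [Rnum, PFaux.Bstar_one]⟩
      · rintro r ⟨p, hp, rfl⟩
        rw [Rnum]
        exact hRle _ _ (hBstar_nn p hp) (hle_B p hp)
    · rw [Rmin]
      apply IsLeast.csInf_eq
      constructor
      · exact ⟨0, hcube0, by rw [Rnum, PFaux.Bstar_zero]⟩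
      · rintro r ⟨p, hp, rfl⟩
        rw [Rnum]
        exact hRle _ _ hBh (hBh_le p hp)
  · intro hle hstub
    have hB_le : ∀ p ∈ cube N, ∀ i j, B i j ≤ Bstar N B Bh p i j := by
      intro p hp i j; rw [PFaux.Bstar_apply]
      have h1 := (hp i).1; have h2 := (hp i).2; have h3 := hle i j; nlinarith
    have hle_Bh : ∀ p ∈ cube N, ∀ i j, Bstar N B Bh p i j ≤ Bh i j := by
      intro p hp i j; rw [PFaux.Bstar_apply]
      have h1 := (hp i).1; have h2 := (hp i).2; have h3 := hle i j; nlinarith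
    refine ⟨?_, ?_, ?_, ?_⟩
    · intro p hp hne
      obtain ⟨j, hj⟩ : ∃ j, p j ≠ 0 := by
        by_contra hall; push_neg at hall; exact hne (funext hall)
      have hj0 : 0 < p j := lt_of_le_of_ne (hp j).1 (Ne.symm hj)
      obtain ⟨k, hk⟩ := hstub j
      refine PFaux.absc_lt_absc hB hBirr (hBstar_nn p hp) (hBstar_nn _ hcube0)
        (hB_le p hp) (hB_le _ hcube0) ?_ (i0 := j) (j0 := k) ?_ hsδ
      · intro i j'
        rw [show Bstar N B Bh (0 : Fin N → ℝ) = Bh from PFaux.Bstar_zero B Bh]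
        exact hle_Bh p hp i j'
      · rw [show Bstar N B Bh (0 : Fin N → ℝ) = Bh from PFaux.Bstar_zero B Bh,
          PFaux.Bstar_apply]
        nlinarith [(hp j).2]
    · intro p hp hne
      obtain ⟨j, hj⟩ : ∃ j, p j ≠ 1 := by
        by_contra hall; push_neg at hall; exact hne (funext hall)
      have hj1 : p j < 1 := lt_of_le_of_ne (hp j).2 hj
      obtain ⟨k, hk⟩ := hstub j
      refine PFaux.absc_lt_absc hB hBirr (hBstar_nn _ hcube1) (hBstar_nn p hp)
        (hB_le _ hcube1) (hB_le p hp) ?_ (i0 := j) (j0 := k) ?_ hsδ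
      · intro i j'
        rw [show Bstar N B Bh (fun _ => (1:ℝ)) = B from PFaux.Bstar_one B Bh]
        exact hB_le p hp i j'
      · rw [show Bstar N B Bh (fun _ => (1:ℝ)) = B from PFaux.Bstar_one B Bh,
          PFaux.Bstar_apply]
        nlinarith [(hp j).1]
    · rw [Rmax]
      apply IsGreatest.csSup_eq
      constructor
      · exact ⟨0, hcube0, by rw [Rnum, PFaux.Bstar_zero]⟩
      · rintro r ⟨p, hp, rfl⟩
        rw [Rnum]
        exact hRle _ _ (hBstar_nn p hp) (hle_Bh p hp)
    · rw [Rmin]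
      apply IsLeast.csInf_eq
      constructor
      · exact ⟨fun _ => 1, hcube1, by rw [Rnum, PFaux.Bstar_one]⟩
      · rintro r ⟨p, hp, rfl⟩
        rw [Rnum]
        exact hRle _ _ hB (hB_le p hp)
end

section
/- The state space Δ_N is positively invariant under the network SIRI dynamics: for every initial condition (p^S(0), p^I(0)) ∈ Δ_N, the corresponding solution exists for all t ≥ 0 and satisfies (p^S(t), p^I(t)) ∈ Δ_N for all t ≥ 0. -/
open Matrix Filter Topology
open Set Metric

section core
variable {N : ℕ}

noncomputable def viol (y : (Fin N → ℝ) × (Fin N → ℝ)) : ℝ :=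
  ∑ j, (max 0 (-y.1 j) + max 0 (-y.2 j) + max 0 (y.1 j + y.2 j - 1))

lemma viol_nonneg (y : (Fin N → ℝ) × (Fin N → ℝ)) : 0 ≤ viol y :=
  Finset.sum_nonneg fun j _ => by positivity

lemma term_le_viol (y : (Fin N → ℝ) × (Fin N → ℝ)) (j : Fin N) :
    max 0 (-y.1 j) ≤ viol y ∧ max 0 (-y.2 j) ≤ viol y ∧
      max 0 (y.1 j + y.2 j - 1) ≤ viol y := by
  have h := Finset.single_le_sum
    (f := fun i => max 0 (-y.1 i) + max 0 (-y.2 i) + max 0 (y.1 i + y.2 i - 1))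
    (fun i _ => by positivity) (Finset.mem_univ j)
  have h1 : (0:ℝ) ≤ max 0 (-y.1 j) := le_max_left _ _
  have h2 : (0:ℝ) ≤ max 0 (-y.2 j) := le_max_left _ _
  have h3 : (0:ℝ) ≤ max 0 (y.1 j + y.2 j - 1) := le_max_left _ _
  refine ⟨?_, ?_, ?_⟩ <;> { show _ ≤ viol y; unfold viol; linarith }

lemma viol_eq_zero_iff (y : (Fin N → ℝ) × (Fin N → ℝ)) (h : viol y ≤ 0) :
    ∀ j, 0 ≤ y.1 j ∧ 0 ≤ y.2 j ∧ y.1 j + y.2 j ≤ 1 := by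
  intro j
  obtain ⟨h1, h2, h3⟩ := term_le_viol y j
  have g1 : -y.1 j ≤ 0 := le_trans (le_max_right _ _) (h1.trans h)
  have g2 : -y.2 j ≤ 0 := le_trans (le_max_right _ _) (h2.trans h)
  have g3 : y.1 j + y.2 j - 1 ≤ 0 := le_trans (le_max_right _ _) (h3.trans h)
  exact ⟨by linarith, by linarith, by linarith⟩

lemma viol_zero_of_inSimplex (y : (Fin N → ℝ) × (Fin N → ℝ))
    (h : ∀ j, 0 ≤ y.1 j ∧ 0 ≤ y.2 j ∧ y.1 j + y.2 j ≤ 1) : viol y = 0 := by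
  unfold viol
  rw [Finset.sum_eq_zero]
  intro j _
  obtain ⟨h1, h2, h3⟩ := h j
  rw [max_eq_left (by linarith), max_eq_left (by linarith), max_eq_left (by linarith)]
  ring

end core

section claims
variable {N : ℕ} (B Bh : Matrix (Fin N) (Fin N) ℝ) (δ : Fin N → ℝ)

noncomputable def Csum : ℝ := (∑ j, ∑ k, (B j k + Bh j k)) + (∑ j, δ j) + 1

variable (hB : ∀ j k, 0 ≤ B j k) (hBh : ∀ j k, 0 ≤ Bh j k) (hδ : ∀ j, 0 < δ j)

include hB hBh hδ

lemma Csum_pos : (1:ℝ) ≤ Csum B Bh δ := by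
  unfold Csum
  have h1 : (0:ℝ) ≤ ∑ j, ∑ k, (B j k + Bh j k) :=
    Finset.sum_nonneg fun j _ => Finset.sum_nonneg fun k _ => by
      have := hB j k; have := hBh j k; linarith
  have h2 : (0:ℝ) ≤ ∑ j, δ j := Finset.sum_nonneg fun j _ => (hδ j).le
  linarith

lemma row_le_Csum (j : Fin N) : ∑ k, (B j k + Bh j k) ≤ Csum B Bh δ := by
  unfold Csum
  have h := Finset.single_le_sum (f := fun j => ∑ k, (B j k + Bh j k))
    (fun i _ => Finset.sum_nonneg fun k _ => by have := hB i k; have := hBh i k; linarith)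
    (Finset.mem_univ j)
  have h2 : (0:ℝ) ≤ ∑ j, δ j := Finset.sum_nonneg fun j _ => (hδ j).le
  linarith

lemma delta_le_Csum (j : Fin N) : δ j ≤ Csum B Bh δ := by
  unfold Csum
  have h := Finset.single_le_sum (f := δ) (fun i _ => (hδ i).le) (Finset.mem_univ j)
  have h1 : (0:ℝ) ≤ ∑ j, ∑ k, (B j k + Bh j k) :=
    Finset.sum_nonneg fun j _ => Finset.sum_nonneg fun k _ => by
      have := hB j k; have := hBh j k; linarith
  linarith

/-- bound on |∑ₖ M j k * I k| for a matrix with rows dominated by B + Bh -/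
lemma abs_sum_le {I : Fin N → ℝ} {M : ℝ} (hI : ∀ k, |I k| ≤ M) (hM : 0 ≤ M) (j : Fin N)
    (C : Matrix (Fin N) (Fin N) ℝ) (hC : ∀ k, 0 ≤ C j k ∧ C j k ≤ B j k + Bh j k) :
    |∑ k, C j k * I k| ≤ Csum B Bh δ * M := by
  calc |∑ k, C j k * I k| ≤ ∑ k, |C j k * I k| := Finset.abs_sum_le_sum_abs _ _
    _ ≤ ∑ k, (B j k + Bh j k) * M := by
        refine Finset.sum_le_sum fun k _ => ?_
        rw [abs_mul, abs_of_nonneg (hC k).1]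
        exact mul_le_mul (hC k).2 (hI k) (abs_nonneg _) (by
          have := hB j k; have := hBh j k; linarith)
    _ = (∑ k, (B j k + Bh j k)) * M := by rw [Finset.sum_mul]
    _ ≤ Csum B Bh δ * M := by
        exact mul_le_mul_of_nonneg_right (row_le_Csum B Bh δ hB hBh hδ j) hM

end claims

section claims2
variable {N : ℕ} (B Bh : Matrix (Fin N) (Fin N) ℝ) (δ : Fin N → ℝ)
variable (hB : ∀ j k, 0 ≤ B j k) (hBh : ∀ j k, 0 ≤ Bh j k) (hδ : ∀ j, 0 < δ j)
include hB hBh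

/-- entrywise bounds on A := (1-s)Bh + sB -/
lemma A_entry_bounds (j k : Fin N) (s q : ℝ) (hq1 : max 0 (-s) ≤ q) (hq2 : max 0 (s-1) ≤ q)
    (M : ℝ) (hM : 1 ≤ M) (hs : |s| ≤ M) :
    (1 - s) * Bh j k + s * B j k ≤ (1 + M) * (B j k + Bh j k) ∧
      -(q * (B j k + Bh j k)) ≤ (1 - s) * Bh j k + s * B j k := by
  have hb := hB j k; have hbh := hBh j k
  have h1 : -s ≤ q := le_trans (le_max_right _ _) hq1
  have h2 : s - 1 ≤ q := le_trans (le_max_right _ _) hq2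
  have hq0 : 0 ≤ q := le_trans (le_max_left _ _) hq1
  have habs : -M ≤ s ∧ s ≤ M := abs_le.mp hs
  constructor
  · nlinarith [habs.1, habs.2]
  · rcases le_or_gt s 0 with h | h
    · nlinarith
    · rcases le_or_gt s 1 with h' | h'
      · nlinarith
      · nlinarith

omit hB hBh in
/-- key product bound: A * w ≤ U * b + q * c * M  -/
lemma prod_bound (A w b U q c M : ℝ) (hAU : A ≤ U) (hAq : -(q*c) ≤ A)
    (hwb : w ≤ b) (hb0 : 0 ≤ b) (hwM : -M ≤ w) (hM : 0 ≤ M) (hU : 0 ≤ U) (hqc : 0 ≤ q*c) :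
    A * w ≤ U * b + q * c * M := by
  rcases le_or_gt 0 A with h | h
  · nlinarith
  · nlinarith

end claims2

section claims3
variable {N : ℕ} (B Bh : Matrix (Fin N) (Fin N) ℝ) (δ : Fin N → ℝ)
variable (hB : ∀ j k, 0 ≤ B j k) (hBh : ∀ j k, 0 ≤ Bh j k) (hδ : ∀ j, 0 < δ j)
include hB hBh hδ

variable {M : ℝ} {y : (Fin N → ℝ) × (Fin N → ℝ)}

/-- Claim 1: derivative of -S j is bounded when S j ≤ 0. -/
lemma claim1 (hM : 1 ≤ M) (hy : ∀ j, |y.1 j| ≤ M ∧ |y.2 j| ≤ M)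
    (j : Fin N) (hSj : y.1 j ≤ 0) :
    y.1 j * ∑ k, B j k * y.2 k ≤ 6 * Csum B Bh δ * M * viol y := by
  set T := ∑ k, B j k * y.2 k with hT
  have hTb : |T| ≤ Csum B Bh δ * M := by
    apply abs_sum_le B Bh δ hB hBh hδ (fun k => (hy k).2) (by linarith) j B
    intro k; exact ⟨hB j k, by have := hBh j k; linarith⟩
  have h1 : y.1 j * T ≤ (-y.1 j) * |T| := by nlinarith [neg_abs_le T, le_abs_self T]
  have h2 : -y.1 j ≤ viol y := le_trans (le_max_right _ _) (term_le_viol y j).1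
  have h3 : (0:ℝ) ≤ viol y := viol_nonneg y
  have h4 : (0:ℝ) ≤ Csum B Bh δ * M := by
    have := Csum_pos B Bh δ hB hBh hδ; nlinarith
  calc y.1 j * T ≤ (-y.1 j) * |T| := h1
    _ ≤ viol y * (Csum B Bh δ * M) := mul_le_mul h2 hTb (abs_nonneg _) h3
    _ ≤ 6 * Csum B Bh δ * M * viol y := by nlinarith

/-- Claim 3: derivative of S j + I j - 1 bounded when it's ≥ 0.
    uses identity: deriv = (1 - S - I) * T̂ - δ I. -/
lemma claim3 (hM : 1 ≤ M) (hy : ∀ j, |y.1 j| ≤ M ∧ |y.2 j| ≤ M)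
    (j : Fin N) (hSj : 0 ≤ y.1 j + y.2 j - 1) :
    (1 - y.1 j - y.2 j) * (∑ k, Bh j k * y.2 k) - δ j * y.2 j
      ≤ 6 * Csum B Bh δ * M * viol y := by
  set T := ∑ k, Bh j k * y.2 k with hT
  have hTb : |T| ≤ Csum B Bh δ * M := by
    apply abs_sum_le B Bh δ hB hBh hδ (fun k => (hy k).2) (by linarith) j Bh
    intro k; exact ⟨hBh j k, by have := hB j k; linarith⟩
  have h1 : (1 - y.1 j - y.2 j) * T ≤ (y.1 j + y.2 j - 1) * |T| := by
    nlinarith [neg_abs_le T, le_abs_self T]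
  have h2 : y.1 j + y.2 j - 1 ≤ viol y := le_trans (le_max_right _ _) (term_le_viol y j).2.2
  have h2' : -y.2 j ≤ viol y := le_trans (le_max_right _ _) (term_le_viol y j).2.1
  have h3 : (0:ℝ) ≤ viol y := viol_nonneg y
  have hC1 : (1:ℝ) ≤ Csum B Bh δ := Csum_pos B Bh δ hB hBh hδ
  have h4 : (0:ℝ) ≤ Csum B Bh δ * M := by nlinarith
  have hδj : 0 < δ j := hδ j
  have hδC : δ j ≤ Csum B Bh δ := delta_le_Csum B Bh δ hB hBh hδ j
  have h5 : (1 - y.1 j - y.2 j) * T ≤ viol y * (Csum B Bh δ * M) :=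
    h1.trans (mul_le_mul h2 hTb (abs_nonneg _) h3)
  have h6 : -(δ j * y.2 j) ≤ δ j * viol y := by nlinarith
  have h7 : δ j * viol y ≤ Csum B Bh δ * viol y := by nlinarith
  have e1 : (1 - y.1 j - y.2 j) * T - δ j * y.2 j
      ≤ viol y * (Csum B Bh δ * M) + Csum B Bh δ * viol y := by linarith
  nlinarith [e1, mul_nonneg h4 h3,
    mul_nonneg (mul_nonneg (sub_nonneg.mpr hM) (by linarith : (0:ℝ) ≤ Csum B Bh δ)) h3]

end claims3

section claims4
variable {N : ℕ} (B Bh : Matrix (Fin N) (Fin N) ℝ) (δ : Fin N → ℝ)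
variable (hB : ∀ j k, 0 ≤ B j k) (hBh : ∀ j k, 0 ≤ Bh j k) (hδ : ∀ j, 0 < δ j)
include hB hBh hδ

variable {M : ℝ} {y : (Fin N → ℝ) × (Fin N → ℝ)}

/-- Claim 2: derivative of -I j bounded when I j ≤ 0. -/
lemma claim2 (hM : 1 ≤ M) (hy : ∀ j, |y.1 j| ≤ M ∧ |y.2 j| ≤ M)
    (j : Fin N) (hIj : y.2 j ≤ 0) :
    -(∑ k, ((1 - y.1 j) * Bh j k + y.1 j * B j k) * y.2 k) + δ j * y.2 j
      + y.2 j * ∑ k, Bh j k * y.2 k ≤ 6 * Csum B Bh δ * M * viol y := by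
  set C := Csum B Bh δ with hCdef
  have hC1 : (1:ℝ) ≤ C := Csum_pos B Bh δ hB hBh hδ
  have hv0 : (0:ℝ) ≤ viol y := viol_nonneg y
  have hM0 : (0:ℝ) ≤ M := by linarith
  -- piece 3 : I j * ∑ Bh I ≤ viol * (C*M)
  have hTb : |∑ k, Bh j k * y.2 k| ≤ C * M := by
    apply abs_sum_le B Bh δ hB hBh hδ (fun k => (hy k).2) hM0 j Bh
    intro k; exact ⟨hBh j k, by have := hB j k; linarith⟩
  have hbj : -y.2 j ≤ viol y := le_trans (le_max_right _ _) (term_le_viol y j).2.1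
  have p3 : y.2 j * ∑ k, Bh j k * y.2 k ≤ viol y * (C * M) := by
    have h1 : y.2 j * ∑ k, Bh j k * y.2 k ≤ (-y.2 j) * |∑ k, Bh j k * y.2 k| := by
      nlinarith [neg_abs_le (∑ k, Bh j k * y.2 k), le_abs_self (∑ k, Bh j k * y.2 k)]
    exact h1.trans (mul_le_mul hbj hTb (abs_nonneg _) hv0)
  -- piece 2
  have p2 : δ j * y.2 j ≤ 0 := mul_nonpos_of_nonneg_of_nonpos (hδ j).le hIj
  -- piece 1
  set q : ℝ := max 0 (-y.1 j) + max 0 (y.1 j - 1) with hqdef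
  have hq0 : 0 ≤ q := by positivity
  have hqv : q ≤ 3 * viol y := by
    have h1 : max 0 (-y.1 j) ≤ viol y := (term_le_viol y j).1
    have h2 : max 0 (y.1 j - 1) ≤ max 0 (y.1 j + y.2 j - 1) + max 0 (-y.2 j) := by
      rcases le_or_gt (y.1 j - 1) 0 with h | h
      · rw [max_eq_left h]; positivity
      · rw [max_eq_right h.le]
        have := le_max_right (0:ℝ) (y.1 j + y.2 j - 1)
        have := le_max_right (0:ℝ) (-y.2 j)
        linarith
    have h3 := (term_le_viol y j).2.1
    have h4 := (term_le_viol y j).2.2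
    linarith
  have p1 : -(∑ k, ((1 - y.1 j) * Bh j k + y.1 j * B j k) * y.2 k)
      ≤ (1 + M) * C * viol y + q * C * M := by
    have step : ∀ k, ((1 - y.1 j) * Bh j k + y.1 j * B j k) * (-y.2 k)
        ≤ (1 + M) * (B j k + Bh j k) * max 0 (-y.2 k) + q * (B j k + Bh j k) * M := by
      intro k
      obtain ⟨hAU, hAq⟩ := A_entry_bounds B Bh hB hBh j k (y.1 j) q
        (le_add_of_nonneg_right (le_max_left _ _))
        (le_add_of_nonneg_left (le_max_left _ _)) M hM (hy j).1
      refine prod_bound _ _ _ _ _ _ _ hAU hAq (le_max_right _ _) (le_max_left _ _)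
        (by have := (hy k).2; have := abs_le.mp this; linarith) hM0 ?_ ?_
      · have := hB j k; have := hBh j k; nlinarith
      · have := hB j k; have := hBh j k; positivity
    have hsum : -(∑ k, ((1 - y.1 j) * Bh j k + y.1 j * B j k) * y.2 k)
        = ∑ k, ((1 - y.1 j) * Bh j k + y.1 j * B j k) * (-y.2 k) := by
      rw [← Finset.sum_neg_distrib]; congr 1; ext k; ring
    rw [hsum]
    calc ∑ k, ((1 - y.1 j) * Bh j k + y.1 j * B j k) * (-y.2 k)
        ≤ ∑ k, ((1 + M) * (B j k + Bh j k) * max 0 (-y.2 k)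
            + q * (B j k + Bh j k) * M) := Finset.sum_le_sum fun k _ => step k
      _ ≤ ∑ k, ((1 + M) * (B j k + Bh j k) * viol y + q * (B j k + Bh j k) * M) := by
          refine Finset.sum_le_sum fun k _ => ?_
          have h1 : max 0 (-y.2 k) ≤ viol y := (term_le_viol y k).2.1
          have h2 : (0:ℝ) ≤ (1 + M) * (B j k + Bh j k) := by
            have := hB j k; have := hBh j k; positivity
          nlinarith
      _ = (1 + M) * (∑ k, (B j k + Bh j k)) * viol y
            + q * (∑ k, (B j k + Bh j k)) * M := by
          have pull : ∀ (r s : ℝ), ∑ k, (r * (B j k + Bh j k) * s)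
              = r * (∑ k, (B j k + Bh j k)) * s := by
            intro r s; rw [← Finset.sum_mul, ← Finset.mul_sum]
          rw [Finset.sum_add_distrib, pull, pull]
      _ ≤ (1 + M) * C * viol y + q * C * M := by
          have hrow := row_le_Csum B Bh δ hB hBh hδ j
          have hrow0 : (0:ℝ) ≤ ∑ k, (B j k + Bh j k) :=
            Finset.sum_nonneg fun k _ => by have := hB j k; have := hBh j k; linarith
          have g1 : (1 + M) * (∑ k, (B j k + Bh j k)) * viol y ≤ (1 + M) * C * viol y :=
            mul_le_mul_of_nonneg_right
              (mul_le_mul_of_nonneg_left hrow (by linarith : (0:ℝ) ≤ 1 + M)) hv0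
          have g2 : q * (∑ k, (B j k + Bh j k)) * M ≤ q * C * M :=
            mul_le_mul_of_nonneg_right (mul_le_mul_of_nonneg_left hrow hq0) hM0
          linarith
  -- combine
  have hCM : (0:ℝ) ≤ C * M := by nlinarith
  have g1 : (1 + M) * C * viol y ≤ 2 * C * M * viol y := by
    nlinarith [mul_nonneg (mul_nonneg (sub_nonneg.mpr hM) (by linarith : (0:ℝ) ≤ C)) hv0]
  have g2 : q * C * M ≤ 3 * C * M * viol y := by
    nlinarith [mul_le_mul_of_nonneg_right hqv hCM]
  nlinarith [p1, p2, p3, g1, g2]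

end claims4

/-- slope of max(0, g ·) is eventually < r on the right, given bound on derivative. -/
lemma slope_max_ev {g : ℝ → ℝ} {x d : ℝ} (hg : HasDerivAt g d x) {r : ℝ}
    (hr : (if 0 ≤ g x then max 0 d else 0) < r) :
    ∀ᶠ z in 𝓝[>] x, (z - x)⁻¹ * (max 0 (g z) - max 0 (g x)) < r := by
  rcases le_or_gt 0 (g x) with hx | hx
  · rw [if_pos hx] at hr
    have hmax : max 0 (g x) = g x := max_eq_right hx
    have hslope : Tendsto (slope g x) (𝓝[>] x) (𝓝 d) :=
      (hasDerivAt_iff_tendsto_slope.mp hg).mono_left (nhdsWithin_mono x fun z hz => hz.ne')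
    have hmaxslope : Tendsto (fun z => max 0 (slope g x z)) (𝓝[>] x) (𝓝 (max 0 d)) :=
      (continuous_max.comp (continuous_const.prodMk continuous_id)).continuousAt.tendsto.comp
        hslope
    have hev : ∀ᶠ z in 𝓝[>] x, max 0 (slope g x z) < r :=
      hmaxslope.eventually_lt_const hr
    filter_upwards [hev, self_mem_nhdsWithin] with z hz hz'
    have hzx : 0 < z - x := sub_pos.mpr hz'
    have key : max 0 (g z) - max 0 (g x) ≤ max 0 (g z - g x) := by
      rw [hmax, ← max_sub_sub_right]
      exact max_le_max (by linarith) le_rfl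
    have : (z - x)⁻¹ * (max 0 (g z) - max 0 (g x)) ≤ max 0 (slope g x z) := by
      calc (z - x)⁻¹ * (max 0 (g z) - max 0 (g x))
          ≤ (z - x)⁻¹ * max 0 (g z - g x) :=
            mul_le_mul_of_nonneg_left key (by positivity)
        _ = max ((z - x)⁻¹ * 0) ((z - x)⁻¹ * (g z - g x)) :=
            mul_max_of_nonneg _ _ (by positivity)
        _ = max 0 (slope g x z) := by
            rw [mul_zero, slope_def_field, div_eq_inv_mul]
    linarith
  · rw [if_neg (not_le.mpr hx)] at hr
    have hev : ∀ᶠ z in 𝓝 x, g z < 0 :=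
      hg.continuousAt.preimage_mem_nhds (Iio_mem_nhds hx)
    have hev' : ∀ᶠ z in 𝓝[>] x, g z < 0 := eventually_nhdsWithin_of_eventually_nhds hev
    filter_upwards [hev'] with z hz
    rw [max_eq_left hz.le, max_eq_left hx.le]
    simpa using hr

variable {N : ℕ} (B Bh : Matrix (Fin N) (Fin N) ℝ) (δ : Fin N → ℝ)

lemma field_fst (y : (Fin N → ℝ) × (Fin N → ℝ)) (j : Fin N) :
    (siriField N B Bh (Matrix.diagonal δ) y).1 j
      = -(y.1 j * ∑ k, B j k * y.2 k) := by
  simp [siriField, mulVec, dotProduct]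

lemma field_snd (y : (Fin N → ℝ) × (Fin N → ℝ)) (j : Fin N) :
    (siriField N B Bh (Matrix.diagonal δ) y).2 j
      = (∑ k, ((1 - y.1 j) * Bh j k + y.1 j * B j k) * y.2 k) - δ j * y.2 j
          - y.2 j * ∑ k, Bh j k * y.2 k := by
  have hA : ∀ k, ((1 - Matrix.diagonal y.1) * Bh + Matrix.diagonal y.1 * B
      - Matrix.diagonal δ) j k
      = ((1 - y.1 j) * Bh j k + y.1 j * B j k) - Matrix.diagonal δ j k := by
    intro k
    simp [Matrix.sub_apply, Matrix.add_apply, Matrix.diagonal_mul, Matrix.sub_mul,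
      Matrix.one_mul, sub_mul]
  simp only [siriField, Bstar, mulVec, dotProduct]
  simp_rw [hA, sub_mul, Finset.sum_sub_distrib]
  have : ∑ k, Matrix.diagonal δ j k * y.2 k = δ j * y.2 j := by
    simp [Matrix.diagonal_apply, Finset.sum_ite_eq, ite_mul]
  rw [this]

section helpers
variable {N : ℕ} (B Bh : Matrix (Fin N) (Fin N) ℝ) (δ : Fin N → ℝ)

lemma field_sum (y : (Fin N → ℝ) × (Fin N → ℝ)) (j : Fin N) :
    (siriField N B Bh (Matrix.diagonal δ) y).1 j + (siriField N B Bh (Matrix.diagonal δ) y).2 j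
      = (1 - y.1 j - y.2 j) * (∑ k, Bh j k * y.2 k) - δ j * y.2 j := by
  rw [field_fst, field_snd]
  have h : ∑ k, ((1 - y.1 j) * Bh j k + y.1 j * B j k) * y.2 k
      - y.1 j * ∑ k, B j k * y.2 k = (1 - y.1 j) * ∑ k, Bh j k * y.2 k := by
    rw [Finset.mul_sum, Finset.mul_sum, ← Finset.sum_sub_distrib]
    exact Finset.sum_congr rfl fun k _ => by ring
  have h2 : (1 - y.1 j - y.2 j) * (∑ k, Bh j k * y.2 k)
      = (1 - y.1 j) * (∑ k, Bh j k * y.2 k) - y.2 j * (∑ k, Bh j k * y.2 k) := by ring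
  linarith [h, h2]

lemma viol_continuous : Continuous fun y : (Fin N → ℝ) × (Fin N → ℝ) => viol y := by
  unfold viol
  fun_prop

lemma hasDerivAt_fst_coord {y : ℝ → (Fin N → ℝ) × (Fin N → ℝ)}
    {F : (Fin N → ℝ) × (Fin N → ℝ)} {x : ℝ} (hy : HasDerivAt y F x) (j : Fin N) :
    HasDerivAt (fun t => (y t).1 j) (F.1 j) x := by
  have h := ((ContinuousLinearMap.proj (R := ℝ) (φ := fun _ : Fin N => ℝ) j).comp
    (ContinuousLinearMap.fst ℝ (Fin N → ℝ) (Fin N → ℝ))).hasFDerivAt.comp_hasDerivAt x hy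
  exact h

lemma hasDerivAt_snd_coord {y : ℝ → (Fin N → ℝ) × (Fin N → ℝ)}
    {F : (Fin N → ℝ) × (Fin N → ℝ)} {x : ℝ} (hy : HasDerivAt y F x) (j : Fin N) :
    HasDerivAt (fun t => (y t).2 j) (F.2 j) x := by
  have h := ((ContinuousLinearMap.proj (R := ℝ) (φ := fun _ : Fin N => ℝ) j).comp
    (ContinuousLinearMap.snd ℝ (Fin N → ℝ) (Fin N → ℝ))).hasFDerivAt.comp_hasDerivAt x hy
  exact h

end helpers

section invcore
variable {N : ℕ} (B Bh : Matrix (Fin N) (Fin N) ℝ) (δ : Fin N → ℝ)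
variable (hB : ∀ j k, 0 ≤ B j k) (hBh : ∀ j k, 0 ≤ Bh j k) (hδ : ∀ j, 0 < δ j)
include hB hBh hδ

lemma inv_core (hN : 0 < N) (y : ℝ → (Fin N → ℝ) × (Fin N → ℝ)) {a b : ℝ}
    (hcont : ContinuousOn y (Icc a b))
    (hd : ∀ t ∈ Ico a b, HasDerivAt y (siriField N B Bh (Matrix.diagonal δ) (y t)) t)
    (h0 : viol (y a) = 0) :
    ∀ t ∈ Icc a b, viol (y t) ≤ 0 := by
  rcases le_or_gt a b with hab | hab
  swap
  · intro t ht; exact absurd (ht.1.trans ht.2) (not_le.mpr hab)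
  obtain ⟨M0, hM0⟩ := isCompact_Icc.exists_bound_of_continuousOn hcont
  set M : ℝ := max M0 1 with hMdef
  have hM1 : (1:ℝ) ≤ M := le_max_right _ _
  have hyM : ∀ t ∈ Icc a b, ∀ j, |(y t).1 j| ≤ M ∧ |(y t).2 j| ≤ M := by
    intro t ht j
    have h := hM0 t ht
    have h1 : |(y t).1 j| ≤ ‖y t‖ := by
      calc |(y t).1 j| = ‖(y t).1 j‖ := (Real.norm_eq_abs _).symm
        _ ≤ ‖(y t).1‖ := norm_le_pi_norm _ j
        _ ≤ ‖y t‖ := norm_fst_le _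
    have h2 : |(y t).2 j| ≤ ‖y t‖ := by
      calc |(y t).2 j| = ‖(y t).2 j‖ := (Real.norm_eq_abs _).symm
        _ ≤ ‖(y t).2‖ := norm_le_pi_norm _ j
        _ ≤ ‖y t‖ := norm_snd_le _
    exact ⟨h1.trans (h.trans (le_max_left _ _)), h2.trans (h.trans (le_max_left _ _))⟩
  set C : ℝ := Csum B Bh δ with hCdef
  have hC1 : (1:ℝ) ≤ C := Csum_pos B Bh δ hB hBh hδ
  set K : ℝ := 3 * N * (6 * C * M) with hKdef
  have hNpos : (0:ℝ) < N := by exact_mod_cast hN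
  have hK0 : 0 < K := by
    rw [hKdef]
    apply mul_pos (by positivity)
    nlinarith
  -- continuity of the violation along the trajectory
  have hf : ContinuousOn (fun t => viol (y t)) (Icc a b) :=
    viol_continuous.comp_continuousOn hcont
  -- the Dini-slope estimate
  have hf' : ∀ x ∈ Ico a b, ∀ r, K * viol (y x) < r →
      ∃ᶠ z in 𝓝[>] x, (z - x)⁻¹ * (viol (y z) - viol (y x)) < r := by
    intro x hx r hr
    have hyd := hd x hx
    have hbnd := hyM x (Ico_subset_Icc_self hx)
    have hv0 : 0 ≤ viol (y x) := viol_nonneg (y x)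
    have hKv0 : 0 ≤ 6 * C * M * viol (y x) := by nlinarith
    set ε' : ℝ := (r - K * viol (y x)) / (3 * N) with hε'def
    have hε'0 : 0 < ε' := div_pos (by linarith) (by positivity)
    set F := siriField N B Bh (Matrix.diagonal δ) (y x) with hFdef
    set d1 : Fin N → ℝ := fun j => (y x).1 j * ∑ k, B j k * (y x).2 k with hd1
    set d2 : Fin N → ℝ := fun j =>
      -(∑ k, ((1 - (y x).1 j) * Bh j k + (y x).1 j * B j k) * (y x).2 k)
        + δ j * (y x).2 j + (y x).2 j * ∑ k, Bh j k * (y x).2 k with hd2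
    set d3 : Fin N → ℝ := fun j =>
      (1 - (y x).1 j - (y x).2 j) * (∑ k, Bh j k * (y x).2 k) - δ j * (y x).2 j with hd3
    set H1 : Fin N → ℝ := fun j => if 0 ≤ -(y x).1 j then max 0 (d1 j) else 0 with hH1
    set H2 : Fin N → ℝ := fun j => if 0 ≤ -(y x).2 j then max 0 (d2 j) else 0 with hH2
    set H3 : Fin N → ℝ := fun j =>
      if 0 ≤ (y x).1 j + (y x).2 j - 1 then max 0 (d3 j) else 0 with hH3
    have hH1b : ∀ j, H1 j ≤ 6 * C * M * viol (y x) := by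
      intro j; rw [hH1]
      beta_reduce
      split
      · next h =>
          exact max_le hKv0 (claim1 B Bh δ hB hBh hδ hM1 hbnd j (by linarith))
      · exact hKv0
    have hH2b : ∀ j, H2 j ≤ 6 * C * M * viol (y x) := by
      intro j; rw [hH2]
      beta_reduce
      split
      · next h =>
          exact max_le hKv0 (claim2 B Bh δ hB hBh hδ hM1 hbnd j (by linarith))
      · exact hKv0
    have hH3b : ∀ j, H3 j ≤ 6 * C * M * viol (y x) := by
      intro j; rw [hH3]
      beta_reduce
      split
      · next h =>
          exact max_le hKv0 (claim3 B Bh δ hB hBh hδ hM1 hbnd j (by linarith))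
      · exact hKv0
    have hsumH : ∑ j, (H1 j + H2 j + H3 j) ≤ K * viol (y x) := by
      calc ∑ j, (H1 j + H2 j + H3 j) ≤ ∑ _j : Fin N, 3 * (6 * C * M * viol (y x)) :=
            Finset.sum_le_sum fun j _ => by
              have := hH1b j; have := hH2b j; have := hH3b j; linarith
        _ = N * (3 * (6 * C * M * viol (y x))) := by
            rw [Finset.sum_const, Finset.card_univ, Fintype.card_fin, nsmul_eq_mul]
        _ = K * viol (y x) := by rw [hKdef]; ring
    -- derivatives of the three constraint families
    have hda : ∀ j, HasDerivAt (fun z => -(y z).1 j) (d1 j) x := by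
      intro j
      have h := (hasDerivAt_fst_coord hyd j).neg
      have : -F.1 j = d1 j := by rw [hFdef, field_fst, hd1]; ring
      rwa [this] at h
    have hdb : ∀ j, HasDerivAt (fun z => -(y z).2 j) (d2 j) x := by
      intro j
      have h := (hasDerivAt_snd_coord hyd j).neg
      have : -F.2 j = d2 j := by rw [hFdef, field_snd, hd2]; ring
      rwa [this] at h
    have hdc : ∀ j, HasDerivAt (fun z => (y z).1 j + (y z).2 j - 1) (d3 j) x := by
      intro j
      have h := ((hasDerivAt_fst_coord hyd j).add (hasDerivAt_snd_coord hyd j)).sub_const 1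
      have : F.1 j + F.2 j = d3 j := by rw [hFdef, field_sum, hd3]
      rwa [this] at h
    -- eventual slope bounds
    have ev : ∀ j : Fin N, ∀ᶠ z in 𝓝[>] x,
        ((z - x)⁻¹ * (max 0 (-(y z).1 j) - max 0 (-(y x).1 j)) < H1 j + ε')
        ∧ ((z - x)⁻¹ * (max 0 (-(y z).2 j) - max 0 (-(y x).2 j)) < H2 j + ε')
        ∧ ((z - x)⁻¹ * (max 0 ((y z).1 j + (y z).2 j - 1)
            - max 0 ((y x).1 j + (y x).2 j - 1)) < H3 j + ε') := by
      intro j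
      have e1 := slope_max_ev (hda j) (r := H1 j + ε') (by
        rw [hH1]; exact lt_add_of_pos_right _ hε'0)
      have e2 := slope_max_ev (hdb j) (r := H2 j + ε') (by
        rw [hH2]; exact lt_add_of_pos_right _ hε'0)
      have e3 := slope_max_ev (hdc j) (r := H3 j + ε') (by
        rw [hH3]; exact lt_add_of_pos_right _ hε'0)
      filter_upwards [e1, e2, e3] with z hz1 hz2 hz3
      exact ⟨hz1, hz2, hz3⟩
    have evAll : ∀ᶠ z in 𝓝[>] x, ∀ j : Fin N, _ := eventually_all.2 ev
    apply Filter.Eventually.frequently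
    filter_upwards [evAll, self_mem_nhdsWithin] with z hz hz'
    have hzx : (0:ℝ) < z - x := sub_pos.mpr hz'
    have expand : (z - x)⁻¹ * (viol (y z) - viol (y x))
        = ∑ j, ((z - x)⁻¹ * (max 0 (-(y z).1 j) - max 0 (-(y x).1 j))
            + (z - x)⁻¹ * (max 0 (-(y z).2 j) - max 0 (-(y x).2 j))
            + (z - x)⁻¹ * (max 0 ((y z).1 j + (y z).2 j - 1)
                - max 0 ((y x).1 j + (y x).2 j - 1))) := by
      unfold viol
      rw [← Finset.sum_sub_distrib, Finset.mul_sum]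
      exact Finset.sum_congr rfl fun j _ => by ring
    rw [expand]
    have hlt : ∑ j, ((z - x)⁻¹ * (max 0 (-(y z).1 j) - max 0 (-(y x).1 j))
            + (z - x)⁻¹ * (max 0 (-(y z).2 j) - max 0 (-(y x).2 j))
            + (z - x)⁻¹ * (max 0 ((y z).1 j + (y z).2 j - 1)
                - max 0 ((y x).1 j + (y x).2 j - 1)))
        < ∑ j, (H1 j + H2 j + H3 j + 3 * ε') := by
      apply Finset.sum_lt_sum_of_nonempty (Finset.univ_nonempty_iff.mpr ⟨⟨0, hN⟩⟩)
      intro j _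
      obtain ⟨g1, g2, g3⟩ := hz j
      linarith
    have hsum2 : ∑ j, (H1 j + H2 j + H3 j + 3 * ε')
        = (∑ j, (H1 j + H2 j + H3 j)) + N * (3 * ε') := by
      rw [Finset.sum_add_distrib, Finset.sum_const, Finset.card_univ, Fintype.card_fin,
        nsmul_eq_mul]
    have hNe : (3 * (N:ℝ)) ≠ 0 := by positivity
    have hε'sum : (N:ℝ) * (3 * ε') = r - K * viol (y x) := by
      rw [hε'def]; field_simp
    calc ∑ j, ((z - x)⁻¹ * (max 0 (-(y z).1 j) - max 0 (-(y x).1 j))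
            + (z - x)⁻¹ * (max 0 (-(y z).2 j) - max 0 (-(y x).2 j))
            + (z - x)⁻¹ * (max 0 ((y z).1 j + (y z).2 j - 1)
                - max 0 ((y x).1 j + (y x).2 j - 1)))
        < ∑ j, (H1 j + H2 j + H3 j + 3 * ε') := hlt
      _ = (∑ j, (H1 j + H2 j + H3 j)) + ((N:ℝ) * (3 * ε')) := hsum2
      _ ≤ K * viol (y x) + (r - K * viol (y x)) := by rw [hε'sum]; linarith
      _ = r := by ring
  have main := le_gronwallBound_of_liminf_deriv_right_le (δ := 0) (K := K) (ε := 0)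
    hf hf' (le_of_eq h0) (fun x _ => by simp)
  intro t ht
  have h := main t ht
  rwa [gronwallBound_ε0_δ0] at h

end invcore

section clamp
variable {N : ℕ}

noncomputable def clampE (y : (Fin N → ℝ) × (Fin N → ℝ)) : (Fin N → ℝ) × (Fin N → ℝ) :=
  (fun j => max (-2) (min 2 (y.1 j)), fun j => max (-2) (min 2 (y.2 j)))

lemma clamp_scalar_lip (u v : ℝ) : |max (-2) (min 2 u) - max (-2) (min 2 v)| ≤ |u - v| := by
  rw [max_comm (-2) (min 2 u), max_comm (-2) (min 2 v)]
  refine (abs_max_sub_max_le_abs _ _ _).trans ?_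
  have h := abs_min_sub_min_le_max 2 u 2 v
  simpa [max_eq_right (abs_nonneg (u - v))] using h

lemma coord_abs_le_norm (y : (Fin N → ℝ) × (Fin N → ℝ)) (j : Fin N) :
    |y.1 j| ≤ ‖y‖ ∧ |y.2 j| ≤ ‖y‖ := by
  constructor
  · calc |y.1 j| = ‖y.1 j‖ := (Real.norm_eq_abs _).symm
      _ ≤ ‖y.1‖ := norm_le_pi_norm _ j
      _ ≤ ‖y‖ := norm_fst_le _
  · calc |y.2 j| = ‖y.2 j‖ := (Real.norm_eq_abs _).symm
      _ ≤ ‖y.2‖ := norm_le_pi_norm _ j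
      _ ≤ ‖y‖ := norm_snd_le _

lemma clampE_lipschitz : LipschitzWith 1 (clampE (N := N)) := by
  apply LipschitzWith.of_dist_le_mul
  intro p q
  rw [NNReal.coe_one, one_mul, Prod.dist_eq]
  apply max_le
  · rw [dist_pi_le_iff dist_nonneg]
    intro j
    calc dist (max (-2) (min 2 (p.1 j))) (max (-2) (min 2 (q.1 j)))
        ≤ |p.1 j - q.1 j| := by rw [Real.dist_eq]; exact clamp_scalar_lip _ _
      _ = dist (p.1 j) (q.1 j) := (Real.dist_eq _ _).symm
      _ ≤ dist p.1 q.1 := dist_le_pi_dist _ _ j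
      _ ≤ dist p q := by rw [Prod.dist_eq]; exact le_max_left _ _
  · rw [dist_pi_le_iff dist_nonneg]
    intro j
    calc dist (max (-2) (min 2 (p.2 j))) (max (-2) (min 2 (q.2 j)))
        ≤ |p.2 j - q.2 j| := by rw [Real.dist_eq]; exact clamp_scalar_lip _ _
      _ = dist (p.2 j) (q.2 j) := (Real.dist_eq _ _).symm
      _ ≤ dist p.2 q.2 := dist_le_pi_dist _ _ j
      _ ≤ dist p q := by rw [Prod.dist_eq]; exact le_max_right _ _

lemma clampE_mem (y : (Fin N → ℝ) × (Fin N → ℝ)) :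
    clampE y ∈ Metric.closedBall (0 : (Fin N → ℝ) × (Fin N → ℝ)) 2 := by
  rw [Metric.mem_closedBall, dist_zero_right, Prod.norm_def]
  apply max_le
  · rw [pi_norm_le_iff_of_nonneg (by norm_num)]
    intro j
    rw [Real.norm_eq_abs, abs_le]
    constructor
    · exact le_max_left _ _
    · exact max_le (by norm_num) (min_le_left _ _)
  · rw [pi_norm_le_iff_of_nonneg (by norm_num)]
    intro j
    rw [Real.norm_eq_abs, abs_le]
    constructor
    · exact le_max_left _ _
    · exact max_le (by norm_num) (min_le_left _ _)

lemma clampE_eq_self {y : (Fin N → ℝ) × (Fin N → ℝ)}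
    (h : ∀ j, |y.1 j| ≤ 2 ∧ |y.2 j| ≤ 2) : clampE y = y := by
  unfold clampE
  ext j
  · obtain ⟨h1, -⟩ := h j
    obtain ⟨ha, hb⟩ := abs_le.mp h1
    show max (-2) (min 2 (y.1 j)) = y.1 j
    rw [min_eq_right hb, max_eq_right ha]
  · obtain ⟨-, h2⟩ := h j
    obtain ⟨ha, hb⟩ := abs_le.mp h2
    show max (-2) (min 2 (y.2 j)) = y.2 j
    rw [min_eq_right hb, max_eq_right ha]

end clamp

section cd
variable {N : ℕ} (B Bh : Matrix (Fin N) (Fin N) ℝ) (δ : Fin N → ℝ)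

lemma contDiff_coord1 (j : Fin N) :
    ContDiff ℝ 1 (fun y : (Fin N → ℝ) × (Fin N → ℝ) => y.1 j) :=
  ((ContinuousLinearMap.proj (R := ℝ) (φ := fun _ : Fin N => ℝ) j).contDiff).comp contDiff_fst

lemma contDiff_coord2 (j : Fin N) :
    ContDiff ℝ 1 (fun y : (Fin N → ℝ) × (Fin N → ℝ) => y.2 j) :=
  ((ContinuousLinearMap.proj (R := ℝ) (φ := fun _ : Fin N => ℝ) j).contDiff).comp contDiff_snd

lemma siriField_contDiff :
    ContDiff ℝ 1 (siriField N B Bh (Matrix.diagonal δ)) := by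
  have hmv : ∀ (C : Matrix (Fin N) (Fin N) ℝ) (j : Fin N),
      ContDiff ℝ 1 (fun y : (Fin N → ℝ) × (Fin N → ℝ) => (C *ᵥ y.2) j) := by
    intro C j
    have : (fun y : (Fin N → ℝ) × (Fin N → ℝ) => (C *ᵥ y.2) j)
        = fun y : (Fin N → ℝ) × (Fin N → ℝ) => ∑ k, C j k * y.2 k := by
      funext y; simp [mulVec, dotProduct]
    rw [this]
    exact ContDiff.sum fun k _ => contDiff_const.mul (contDiff_coord2 k)
  have hmv1 : ∀ (j : Fin N),
      ContDiff ℝ 1 (fun y : (Fin N → ℝ) × (Fin N → ℝ) =>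
        ((Bstar N B Bh y.1 - Matrix.diagonal δ) *ᵥ y.2) j) := by
    intro j
    have : (fun y : (Fin N → ℝ) × (Fin N → ℝ) =>
        ((Bstar N B Bh y.1 - Matrix.diagonal δ) *ᵥ y.2) j)
        = fun y : (Fin N → ℝ) × (Fin N → ℝ) =>
            ∑ k, (((1 - y.1 j) * Bh j k + y.1 j * B j k) - Matrix.diagonal δ j k) * y.2 k := by
      funext y
      simp only [mulVec, dotProduct]
      refine Finset.sum_congr rfl fun k _ => ?_
      congr 1
      simp [Bstar, Matrix.sub_apply, Matrix.add_apply, Matrix.diagonal_mul, Matrix.sub_mul,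
        Matrix.one_mul, sub_mul]
    rw [this]
    exact ContDiff.sum fun k _ =>
      ((((contDiff_const.sub (contDiff_coord1 j)).mul contDiff_const).add
        ((contDiff_coord1 j).mul contDiff_const)).sub contDiff_const).mul (contDiff_coord2 k)
  unfold siriField
  apply ContDiff.prodMk
  · apply contDiff_pi.mpr
    intro j
    exact ((contDiff_coord1 j).mul (hmv B j)).neg
  · apply contDiff_pi.mpr
    intro j
    exact (hmv1 j).sub ((contDiff_coord2 j).mul (hmv Bh j))
end cd

section lip
variable {E : Type*} [NormedAddCommGroup E] [NormedSpace ℝ E] [ProperSpace E]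

lemma lip_of_contDiff {f : E → E} (hf : ContDiff ℝ 1 f) :
    ∃ K : NNReal, LipschitzOnWith K f (closedBall (0 : E) 2) := by
  obtain ⟨c, hc⟩ := (isCompact_closedBall (0:E) 2).exists_bound_of_continuousOn
    ((hf.continuous_fderiv one_ne_zero).continuousOn)
  have hconv : Convex ℝ (closedBall (0:E) 2) := convex_closedBall _ _
  refine ⟨⟨max c 0, le_max_right _ _⟩, ?_⟩
  apply hconv.lipschitzOnWith_of_nnnorm_hasFDerivWithin_le
    (f' := fun x => fderiv ℝ f x)
  · intro x hx
    exact (hf.differentiable one_ne_zero x).hasFDerivAt.hasFDerivWithinAt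
  · intro x hx
    have := hc x hx
    have h2 : ‖fderiv ℝ f x‖ ≤ max c 0 := le_trans this (le_max_left _ _)
    refine (NNReal.coe_le_coe (r₂ := ⟨max c 0, le_max_right _ _⟩)).mp ?_
    exact h2

end lip

section exist
variable {N : ℕ} (B Bh : Matrix (Fin N) (Fin N) ℝ) (δ : Fin N → ℝ)

noncomputable def gfield (y : (Fin N → ℝ) × (Fin N → ℝ)) : (Fin N → ℝ) × (Fin N → ℝ) :=
  siriField N B Bh (Matrix.diagonal δ) (clampE y)

lemma gfield_lipschitz : ∃ K : NNReal, LipschitzWith K (gfield B Bh δ) := by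
  obtain ⟨K, hK⟩ := lip_of_contDiff (siriField_contDiff B Bh δ)
  refine ⟨K, LipschitzWith.of_dist_le_mul fun p q => ?_⟩
  calc dist (gfield B Bh δ p) (gfield B Bh δ q)
      ≤ K * dist (clampE p) (clampE q) :=
        hK.dist_le_mul _ (clampE_mem p) _ (clampE_mem q)
    _ ≤ K * dist p q := by
        have h := clampE_lipschitz.dist_le_mul p q
        rw [NNReal.coe_one, one_mul] at h
        exact mul_le_mul_of_nonneg_left h K.coe_nonneg

lemma gfield_bound : ∃ Cb : ℝ, 0 ≤ Cb ∧ ∀ y, ‖gfield B Bh δ y‖ ≤ Cb := by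
  obtain ⟨c, hc⟩ := IsCompact.exists_bound_of_continuousOn
    (isCompact_closedBall (0 : (Fin N → ℝ) × (Fin N → ℝ)) 2)
    ((siriField_contDiff B Bh δ).continuous.continuousOn)
  refine ⟨max c 0, le_max_right _ _, fun y => ?_⟩
  exact (hc _ (clampE_mem y)).trans (le_max_left _ _)

lemma exists_gsol (y₀ : (Fin N → ℝ) × (Fin N → ℝ)) :
    ∃ Y : ℝ → (Fin N → ℝ) × (Fin N → ℝ), Y 0 = y₀ ∧
      ∀ t : ℝ, 0 ≤ t → HasDerivAt Y (gfield B Bh δ (Y t)) t := by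
  obtain ⟨K, hK⟩ := gfield_lipschitz B Bh δ
  obtain ⟨Cb, hCb0, hCb⟩ := gfield_bound B Bh δ
  have hPL : ∀ n : ℕ, ∃ f : ℝ → (Fin N → ℝ) × (Fin N → ℝ), f 0 = y₀ ∧
      ∀ t ∈ Icc (-1:ℝ) (n+1),
        HasDerivWithinAt f (gfield B Bh δ (f t)) (Icc (-1:ℝ) (n+1)) t := by
    intro n
    have hn0 : (0:ℝ) ≤ n := Nat.cast_nonneg n
    have hIPL : IsPicardLindelof (fun _ y => gfield B Bh δ y) (tmin := -1) (tmax := n+1)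
        ⟨0, by constructor <;> [norm_num; positivity]⟩ y₀
        ⟨Cb*(n+1)+1, by positivity⟩ 0 ⟨Cb, hCb0⟩ K := by
      constructor
      · exact fun t _ => hK.lipschitzOnWith
      · exact fun x _ => continuousOn_const
      · exact fun t _ x _ => hCb x
      · have hmax : max ((n:ℝ)+1-0) (0-(-1)) = (n:ℝ)+1 := by
          rw [max_eq_left] <;> linarith
        show Cb * max ((n:ℝ)+1-0) (0-(-1)) ≤ (Cb*(n+1)+1 : ℝ) - ((0:NNReal):ℝ)
        rw [hmax, NNReal.coe_zero, sub_zero]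
        nlinarith
    exact IsPicardLindelof.exists_eq_forall_mem_Icc_hasDerivWithinAt₀ hIPL
  choose F hF0 hFd using hPL
  have hder : ∀ n : ℕ, ∀ t ∈ Ioo (-1:ℝ) (n+1),
      HasDerivAt (F n) (gfield B Bh δ (F n t)) t :=
    fun n t ht => (hFd n t (Ioo_subset_Icc_self ht)).hasDerivAt (Icc_mem_nhds ht.1 ht.2)
  have agree : ∀ n m : ℕ, n ≤ m →
      EqOn (F n) (F m) (Icc (-(1:ℝ)/2) (n + 1/2)) := by
    intro n m hnm
    have hn0 : (0:ℝ) ≤ n := Nat.cast_nonneg n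
    have hnm' : (n:ℝ) ≤ m := Nat.cast_le.mpr hnm
    have hsubn : Icc (-(1:ℝ)/2) (n + 1/2) ⊆ Ioo (-1:ℝ) (n+1) := by
      intro z hz; exact ⟨by have := hz.1; linarith, by have := hz.2; linarith⟩
    have hsubn' : Ioo (-(1:ℝ)/2) (n + 1/2) ⊆ Ioo (-1:ℝ) (n+1) :=
      fun z hz => hsubn (Ioo_subset_Icc_self hz)
    have hsubm : Ioo (-(1:ℝ)/2) (n + 1/2) ⊆ Ioo (-1:ℝ) (m+1) := by
      intro z hz; exact ⟨by have := hz.1; linarith, by have := hz.2; linarith⟩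
    have hsubm2 : Icc (-(1:ℝ)/2) (n + 1/2) ⊆ Ioo (-1:ℝ) (m+1) := by
      intro z hz; exact ⟨by have := hz.1; linarith, by have := hz.2; linarith⟩
    exact ODE_solution_unique_of_mem_Icc
      (v := fun _ y => gfield B Bh δ y) (s := fun _ => univ)
      (fun t _ x _ y _ => hK x y)
      (by constructor <;> [norm_num; positivity])
      (fun t ht => ((hder n t (hsubn ht)).continuousAt.continuousWithinAt))
      (fun t ht => hder n t (hsubn' ht))
      (fun t _ => mem_univ _)
      (fun t ht => ((hder m t (hsubm2 ht)).continuousAt.continuousWithinAt))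
      (fun t ht => hder m t (hsubm ht))
      (fun t _ => mem_univ _)
      ((hF0 n).trans (hF0 m).symm)
  refine ⟨fun t => F ⌈t⌉₊ t, by simpa [Nat.ceil_zero] using hF0 0, ?_⟩
  intro t ht
  set m := ⌈t⌉₊ + 1 with hm
  have htceil := Nat.le_ceil t
  have hmcast : (m:ℝ) = (⌈t⌉₊:ℝ) + 1 := by push_cast [hm]; ring
  have hmem : ∀ z ∈ Ioo (t - 4⁻¹) (t + 4⁻¹), F ⌈z⌉₊ z = F m z := by
    intro z hz
    have hzc := Nat.le_ceil z
    have h1 : ⌈z⌉₊ ≤ m := by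
      apply Nat.ceil_le.mpr
      rw [hmcast]
      have := hz.2
      linarith
    have h2 : z ∈ Icc (-(1:ℝ)/2) ((⌈z⌉₊:ℝ) + 1/2) := by
      constructor
      · have := hz.1; linarith
      · linarith
    exact agree ⌈z⌉₊ m h1 h2
  have htIoo : t ∈ Ioo (t - 4⁻¹) (t + 4⁻¹) := by constructor <;> linarith
  have hYt : F ⌈t⌉₊ t = F m t := hmem t htIoo
  have hFm : HasDerivAt (F m) (gfield B Bh δ (F m t)) t := by
    apply hder m t
    constructor
    · linarith
    · rw [hmcast]; linarith
  have hev : (fun t => F ⌈t⌉₊ t) =ᶠ[𝓝 t] F m :=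
    Filter.eventuallyEq_of_mem (Ioo_mem_nhds htIoo.1 htIoo.2) hmem
  have hres := hFm.congr_of_eventuallyEq hev
  rwa [← hYt] at hres

end exist

section stay
variable {N : ℕ} (B Bh : Matrix (Fin N) (Fin N) ℝ) (δ : Fin N → ℝ)
variable (hB : ∀ j k, 0 ≤ B j k) (hBh : ∀ j k, 0 ≤ Bh j k) (hδ : ∀ j, 0 < δ j)
include hB hBh hδ

lemma extend_step (hN : 0 < N) (Y : ℝ → (Fin N → ℝ) × (Fin N → ℝ))
    (hY : ∀ t, 0 ≤ t → HasDerivAt Y (gfield B Bh δ (Y t)) t)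
    {c : ℝ} (hc : 0 ≤ c)
    (hin : ∀ j, 0 ≤ (Y c).1 j ∧ 0 ≤ (Y c).2 j ∧ (Y c).1 j + (Y c).2 j ≤ 1) :
    ∃ η > 0, ∀ s ∈ Icc c (c + η), ∀ j,
      0 ≤ (Y s).1 j ∧ 0 ≤ (Y s).2 j ∧ (Y s).1 j + (Y s).2 j ≤ 1 := by
  obtain ⟨d, hd0, hdd⟩ := Metric.continuousAt_iff.mp (hY c hc).continuousAt 1 one_pos
  refine ⟨d/2, by linarith, ?_⟩
  have hcoord : ∀ s ∈ Icc c (c + d/2), ∀ j, |(Y s).1 j| ≤ 2 ∧ |(Y s).2 j| ≤ 2 := by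
    intro s hs j
    have hds : dist s c < d := by
      rw [Real.dist_eq, abs_of_nonneg (by linarith [hs.1])]
      linarith [hs.2]
    have h1 : dist (Y s) (Y c) < 1 := hdd hds
    have h2 := coord_abs_le_norm (Y s - Y c) j
    rw [← dist_eq_norm] at h2
    have e1 : (Y s - Y c).1 j = (Y s).1 j - (Y c).1 j := rfl
    have e2 : (Y s - Y c).2 j = (Y s).2 j - (Y c).2 j := rfl
    rw [e1] at h2
    obtain ⟨hj1, hj2, hj3⟩ := hin j
    have hb1 : |(Y c).1 j| ≤ 1 := abs_le.mpr ⟨by linarith, by linarith⟩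
    have hb2 : |(Y c).2 j| ≤ 1 := abs_le.mpr ⟨by linarith, by linarith⟩
    obtain ⟨g1, g2⟩ := h2
    rw [e2] at g2
    constructor
    · have := abs_sub_abs_le_abs_sub ((Y s).1 j) ((Y c).1 j)
      linarith
    · have := abs_sub_abs_le_abs_sub ((Y s).2 j) ((Y c).2 j)
      linarith
  have hfd : ∀ t ∈ Ico c (c + d/2),
      HasDerivAt Y (siriField N B Bh (Matrix.diagonal δ) (Y t)) t := by
    intro t ht
    have h := hY t (le_trans hc ht.1)
    unfold gfield at h
    rwa [clampE_eq_self (hcoord t ⟨ht.1, ht.2.le⟩)] at h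
  have hcont : ContinuousOn Y (Icc c (c + d/2)) :=
    fun t ht => (hY t (le_trans hc ht.1)).continuousAt.continuousWithinAt
  have h0 : viol (Y c) = 0 := viol_zero_of_inSimplex _ hin
  have hres := inv_core B Bh δ hB hBh hδ hN Y hcont hfd h0
  exact fun s hs => viol_eq_zero_iff _ (hres s hs)

lemma stay (hN : 0 < N) (Y : ℝ → (Fin N → ℝ) × (Fin N → ℝ))
    (hY : ∀ t, 0 ≤ t → HasDerivAt Y (gfield B Bh δ (Y t)) t)
    (h0 : ∀ j, 0 ≤ (Y 0).1 j ∧ 0 ≤ (Y 0).2 j ∧ (Y 0).1 j + (Y 0).2 j ≤ 1) :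
    ∀ t, 0 ≤ t → ∀ j, 0 ≤ (Y t).1 j ∧ 0 ≤ (Y t).2 j ∧ (Y t).1 j + (Y t).2 j ≤ 1 := by
  intro T hT
  set P : ℝ → Prop :=
    fun s => ∀ j, 0 ≤ (Y s).1 j ∧ 0 ≤ (Y s).2 j ∧ (Y s).1 j + (Y s).2 j ≤ 1 with hP
  show P T
  set SX := {s : ℝ | s ∈ Icc 0 T ∧ ∀ u ∈ Icc (0:ℝ) s, P u} with hSX
  have h0S : (0:ℝ) ∈ SX := by
    refine ⟨⟨le_rfl, hT⟩, fun u hu => ?_⟩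
    have : u = 0 := le_antisymm hu.2 hu.1
    rw [this]; exact h0
  have hbdd : BddAbove SX := ⟨T, fun s hs => hs.1.2⟩
  set c := sSup SX with hcdef
  have hc0 : 0 ≤ c := le_csSup hbdd h0S
  have hcT : c ≤ T := csSup_le ⟨0, h0S⟩ (fun s hs => hs.1.2)
  have hlt : ∀ u, 0 ≤ u → u < c → P u := by
    intro u hu huc
    obtain ⟨s, hsS, hus⟩ := exists_lt_of_lt_csSup ⟨0, h0S⟩ huc
    exact hsS.2 u ⟨hu, hus.le⟩
  have hPc : P c := by
    rcases eq_or_lt_of_le hc0 with h | h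
    · rw [← h]; exact h0
    · have htd : Tendsto Y (𝓝[<] c) (𝓝 (Y c)) :=
        (hY c hc0).continuousAt.continuousWithinAt
      have hev : ∀ᶠ u in 𝓝[<] c, P u := by
        have hIoo : Ioo (0:ℝ) c ∈ 𝓝[<] c := Ioo_mem_nhdsLT_of_mem ⟨h, le_rfl⟩
        filter_upwards [hIoo] with u hu
        exact hlt u hu.1.le hu.2
      intro j
      have ht1 : Tendsto (fun u => (Y u).1 j) (𝓝[<] c) (𝓝 ((Y c).1 j)) :=
        (((continuous_apply j).comp continuous_fst).continuousAt).tendsto.comp htd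
      have ht2 : Tendsto (fun u => (Y u).2 j) (𝓝[<] c) (𝓝 ((Y c).2 j)) :=
        (((continuous_apply j).comp continuous_snd).continuousAt).tendsto.comp htd
      refine ⟨?_, ?_, ?_⟩
      · refine ge_of_tendsto ht1 ?_
        filter_upwards [hev] with u hu; exact (hu j).1
      · refine ge_of_tendsto ht2 ?_
        filter_upwards [hev] with u hu; exact (hu j).2.1
      · refine le_of_tendsto (ht1.add ht2) ?_
        filter_upwards [hev] with u hu; exact (hu j).2.2
  rcases eq_or_lt_of_le hcT with hceq | hclt
  · rw [← hceq]; exact hPc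
  · exfalso
    obtain ⟨η, hη, hext⟩ := extend_step B Bh δ hB hBh hδ hN Y hY hc0 hPc
    have hc' : min (c + η) T ∈ SX := by
      refine ⟨⟨le_min (by linarith) hT, min_le_right _ _⟩, fun u hu => ?_⟩
      rcases le_or_gt u c with h | h
      · rcases eq_or_lt_of_le h with h' | h'
        · rw [h']; exact hPc
        · exact hlt u hu.1 h'
      · have humem : u ∈ Icc c (c + η) :=
          ⟨h.le, le_trans hu.2 (min_le_left _ _)⟩
        exact hext u humem
    have hle : min (c + η) T ≤ c := le_csSup hbdd hc'
    have hgt : c < min (c + η) T := lt_min (by linarith) hclt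
    linarith

end stay

/-- Δ_N is positively invariant: solutions exist for all t ≥ 0 and
stay in Δ_N, and every solution starting in Δ_N remains in Δ_N. -/
theorem stmt14 {N : ℕ} (hN : 2 ≤ N) (B Bh : Matrix (Fin N) (Fin N) ℝ) (δ : Fin N → ℝ)
    (hB : ∀ j k, 0 ≤ B j k) (hBirr : MatIrreducible N B)
    (hBh : ∀ j k, 0 ≤ Bh j k) (hz : ∀ j k, B j k = 0 → Bh j k = 0)
    (hδ : ∀ j, 0 < δ j) :
    (∀ y₀ : (Fin N → ℝ) × (Fin N → ℝ), inSimplex N y₀ →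
      ∃ y : ℝ → (Fin N → ℝ) × (Fin N → ℝ),
        y 0 = y₀ ∧ IsSol N B Bh (Matrix.diagonal δ) y ∧
        ∀ t : ℝ, 0 ≤ t → inSimplex N (y t))
    ∧ (∀ y : ℝ → (Fin N → ℝ) × (Fin N → ℝ),
        IsSol N B Bh (Matrix.diagonal δ) y → inSimplex N (y 0) →
        ∀ t : ℝ, 0 ≤ t → inSimplex N (y t)) := by
  have hN0 : 0 < N := by omega
  constructor
  · intro y₀ hy₀
    obtain ⟨Y, hY0, hYd⟩ := exists_gsol B Bh δ y₀
    have h0 : ∀ j, 0 ≤ (Y 0).1 j ∧ 0 ≤ (Y 0).2 j ∧ (Y 0).1 j + (Y 0).2 j ≤ 1 := by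
      rw [hY0]; exact fun j => hy₀ j
    have hstay := stay B Bh δ hB hBh hδ hN0 Y hYd h0
    refine ⟨Y, hY0, ?_, fun t ht => hstay t ht⟩
    intro t ht
    have hP := hstay t ht
    have hcoords : ∀ j, |(Y t).1 j| ≤ 2 ∧ |(Y t).2 j| ≤ 2 := by
      intro j; obtain ⟨ha, hb, hc⟩ := hP j
      exact ⟨abs_le.mpr ⟨by linarith, by linarith⟩, abs_le.mpr ⟨by linarith, by linarith⟩⟩
    have h := hYd t ht
    unfold gfield at h
    rwa [clampE_eq_self hcoords] at h
  · intro y hsol hin t ht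
    have hcont : ContinuousOn y (Set.Icc 0 t) :=
      fun u hu => (hsol u hu.1).continuousAt.continuousWithinAt
    have hd : ∀ u ∈ Set.Ico (0:ℝ) t,
        HasDerivAt y (siriField N B Bh (Matrix.diagonal δ) (y u)) u :=
      fun u hu => hsol u hu.1
    have h0 : viol (y 0) = 0 := viol_zero_of_inSimplex _ (fun j => hin j)
    have hres := inv_core B Bh δ hB hBh hδ hN0 y hcont hd h0 t ⟨ht, le_rfl⟩
    exact fun j => viol_eq_zero_iff _ hres j
end
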